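/- arXiv:2203.02998 — 6 statements merged into one kernel-verified Lean document; each statement's English description precedes it below -/
import Mathlib

section
/- Let A be a 2×2 real symplectic matrix (det A = 1). The family {N^k : k ∈ ℤ} is bounded for every symplectic N in some neighborhood of A if and only if the eigenvalues of A lie in S¹ \ {±1} (equivalently |tr A| < 2). -/
open Matrix Polynomial

namespace SSaux

/-- Cayley–Hamilton for 2×2 real matrices. -/
lemma ch (A : Matrix (Fin 2) (Fin 2) ℝ) : A * A = A.trace • A - A.det • 1 := by
  ext i j
  fin_cases i <;> fin_cases j <;>
    simp [Matrix.mul_apply, Matrix.trace_fin_two, Matrix.det_fin_two, Fin.sum_univ_two,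
      Matrix.one_apply] <;> ring

lemma ch1 {A : Matrix (Fin 2) (Fin 2) ℝ} (hA : A.det = 1) :
    A * A = A.trace • A - 1 := by
  rw [ch, hA, one_smul]

def cheb (τ : ℝ) : ℕ → ℝ
  | 0 => 0
  | 1 => 1
  | (n + 2) => τ * cheb τ (n + 1) - cheb τ n

lemma cheb_invariant (τ : ℝ) :
    ∀ k : ℕ, (cheb τ (k+1))^2 + (cheb τ k)^2 - τ * cheb τ (k+1) * cheb τ k = 1 := by
  intro k
  induction k with
  | zero => simp [cheb]
  | succ n ih =>
      have h : cheb τ (n + 2) = τ * cheb τ (n + 1) - cheb τ n := rfl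
      rw [h]
      linear_combination ih

lemma cheb_sq_le {τ : ℝ} (ht : |τ| < 2) (k : ℕ) :
    (cheb τ k)^2 ≤ 2 / (2 - |τ|) := by
  have h2 : 0 < 2 - |τ| := by linarith
  rw [le_div_iff₀ h2]
  have inv := cheb_invariant τ k
  set a := cheb τ (k+1)
  set b := cheb τ k
  have h1 : τ * a * b ≤ |τ| * |a| * |b| := by
    calc τ * a * b ≤ |τ * a * b| := le_abs_self _
    _ = |τ| * |a| * |b| := by rw [abs_mul, abs_mul]
  nlinarith [sq_nonneg (|a| - |b|), sq_abs a, sq_abs b, abs_nonneg τ, abs_nonneg a,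
    abs_nonneg b, sq_nonneg a]

lemma cheb_abs_le {τ : ℝ} (ht : |τ| < 2) (k : ℕ) :
    |cheb τ k| ≤ Real.sqrt (2 / (2 - |τ|)) := by
  rw [← Real.sqrt_sq_eq_abs]
  exact Real.sqrt_le_sqrt (cheb_sq_le ht k)

lemma pow_formula {N : Matrix (Fin 2) (Fin 2) ℝ} (hN : N.det = 1) :
    ∀ k : ℕ, N ^ (k + 1) = cheb N.trace (k + 1) • N - cheb N.trace k • 1 := by
  intro k
  induction k with
  | zero => simp [cheb]
  | succ n ih =>
      have h : cheb N.trace (n + 2) = N.trace * cheb N.trace (n + 1) - cheb N.trace n := rfl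
      rw [pow_succ, ih, h, sub_mul, smul_mul_assoc, smul_mul_assoc, one_mul, ch1 hN]
      rw [smul_sub, smul_smul]
      module

lemma M_ge_one {τ : ℝ} (ht : |τ| < 2) : 1 ≤ Real.sqrt (2 / (2 - |τ|)) := by
  have h2 : 0 < 2 - |τ| := by linarith
  rw [show (1:ℝ) = Real.sqrt 1 by simp]
  apply Real.sqrt_le_sqrt
  rw [le_div_iff₀ h2]
  have := abs_nonneg τ
  linarith

/-- bound on nat powers of an elliptic symplectic matrix -/
lemma pow_entry_bound {N : Matrix (Fin 2) (Fin 2) ℝ} (hN : N.det = 1)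
    (ht : |N.trace| < 2) (k : ℕ) (i j : Fin 2) :
    |(N ^ k) i j| ≤ Real.sqrt (2 / (2 - |N.trace|)) * (|N i j| + 1) := by
  set M := Real.sqrt (2 / (2 - |N.trace|)) with hM
  have hM1 : 1 ≤ M := M_ge_one ht
  have habs : ∀ i j : Fin 2, |(1 : Matrix (Fin 2) (Fin 2) ℝ) i j| ≤ 1 := by
    intro i j
    fin_cases i <;> fin_cases j <;> simp [Matrix.one_apply]
  rcases k with _ | k
  · calc |(N ^ 0) i j| ≤ 1 := by rw [pow_zero]; exact habs i j
    _ ≤ M * (|N i j| + 1) := by nlinarith [abs_nonneg (N i j)]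
  · rw [pow_formula hN k]
    have h1 := cheb_abs_le ht (k+1)
    have h2 := cheb_abs_le ht k
    calc |(cheb N.trace (k+1) • N - cheb N.trace k • 1) i j|
        = |cheb N.trace (k+1) * N i j - cheb N.trace k * (1 : Matrix (Fin 2) (Fin 2) ℝ) i j| := by
          simp [Matrix.sub_apply, Matrix.smul_apply, smul_eq_mul]
      _ ≤ |cheb N.trace (k+1) * N i j| + |cheb N.trace k * (1 : Matrix (Fin 2) (Fin 2) ℝ) i j| :=
          abs_sub _ _
      _ = |cheb N.trace (k+1)| * |N i j| + |cheb N.trace k| * |(1 : Matrix (Fin 2) (Fin 2) ℝ) i j| := by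
          rw [abs_mul, abs_mul]
      _ ≤ M * |N i j| + M * 1 := by
          have := habs i j
          have := abs_nonneg (N i j)
          have := abs_nonneg ((1 : Matrix (Fin 2) (Fin 2) ℝ) i j)
          nlinarith
      _ = M * (|N i j| + 1) := by ring

lemma inv_eq {N : Matrix (Fin 2) (Fin 2) ℝ} (hN : N.det = 1) :
    N⁻¹ = N.trace • 1 - N := by
  apply Matrix.inv_eq_right_inv
  rw [Matrix.mul_sub, Matrix.mul_smul, Matrix.mul_one, ch1 hN]
  abel

lemma trace_inv {N : Matrix (Fin 2) (Fin 2) ℝ} (hN : N.det = 1) :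
    (N⁻¹).trace = N.trace := by
  rw [inv_eq hN, trace_sub, trace_smul, trace_one]
  simp; ring

lemma det_inv {N : Matrix (Fin 2) (Fin 2) ℝ} (hN : N.det = 1) :
    (N⁻¹).det = 1 := by
  rw [Matrix.det_nonsing_inv, hN]; simp

lemma entry_le_sum (N : Matrix (Fin 2) (Fin 2) ℝ) (i j : Fin 2) :
    |N i j| ≤ |N 0 0| + |N 0 1| + |N 1 0| + |N 1 1| := by
  have h00 := abs_nonneg (N 0 0); have h01 := abs_nonneg (N 0 1)
  have h10 := abs_nonneg (N 1 0); have h11 := abs_nonneg (N 1 1)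
  fin_cases i <;> fin_cases j <;> simp <;> linarith

lemma elliptic_bounded {N : Matrix (Fin 2) (Fin 2) ℝ} (hN : N.det = 1)
    (ht : |N.trace| < 2) :
    ∃ C, ∀ k : ℤ, ∀ i j, |(N ^ k) i j| ≤ C := by
  set M := Real.sqrt (2 / (2 - |N.trace|)) with hMdef
  set B := |N 0 0| + |N 0 1| + |N 1 0| + |N 1 1| with hBdef
  have hB0 : 0 ≤ B := by positivity
  have hM1 : 1 ≤ M := M_ge_one ht
  refine ⟨M * (B + 4), ?_⟩
  have hNentry : ∀ i j, |N i j| ≤ B := entry_le_sum N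
  have hNinv : ∀ i j, |N⁻¹ i j| ≤ B + 2 := by
    intro i j
    rw [inv_eq hN]
    have h1 : |(1 : Matrix (Fin 2) (Fin 2) ℝ) i j| ≤ 1 := by
      fin_cases i <;> fin_cases j <;> simp [Matrix.one_apply]
    calc |(N.trace • 1 - N) i j| = |N.trace * (1 : Matrix (Fin 2) (Fin 2) ℝ) i j - N i j| := by
          simp [Matrix.sub_apply, Matrix.smul_apply, smul_eq_mul]
      _ ≤ |N.trace| * |(1 : Matrix (Fin 2) (Fin 2) ℝ) i j| + |N i j| := by
          rw [← abs_mul]; exact abs_sub _ _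
      _ ≤ B + 2 := by
          have := hNentry i j
          have := abs_nonneg N.trace
          nlinarith
  intro k i j
  rcases Int.eq_nat_or_neg k with ⟨n, rfl | rfl⟩
  · rw [zpow_natCast]
    calc |(N ^ n) i j| ≤ M * (|N i j| + 1) := pow_entry_bound hN ht n i j
      _ ≤ M * (B + 4) := by have := hNentry i j; nlinarith
  · rw [Matrix.zpow_neg_natCast, ← Matrix.inv_pow']
    have ht' : |(N⁻¹).trace| < 2 := by rw [trace_inv hN]; exact ht
    have := pow_entry_bound (det_inv hN) ht' n i j
    rw [trace_inv hN] at this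
    calc |(N⁻¹ ^ n) i j| ≤ M * (|N⁻¹ i j| + 1) := this
      _ ≤ M * (B + 4) := by have := hNinv i j; nlinarith

def BoundedNat (B : Matrix (Fin 2) (Fin 2) ℝ) : Prop :=
  ∃ C, ∀ k : ℕ, ∀ i j, |(B ^ k) i j| ≤ C

lemma boundedNat_of_z {N : Matrix (Fin 2) (Fin 2) ℝ}
    (h : ∃ C, ∀ k : ℤ, ∀ i j, |(N ^ k) i j| ≤ C) : BoundedNat N := by
  obtain ⟨C, hC⟩ := h
  refine ⟨C, fun k i j => ?_⟩
  have := hC (k : ℤ) i j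
  rwa [zpow_natCast] at this

lemma boundedNat_sq {N : Matrix (Fin 2) (Fin 2) ℝ} (h : BoundedNat N) :
    BoundedNat (N * N) := by
  obtain ⟨C, hC⟩ := h
  refine ⟨C, fun k i j => ?_⟩
  have : (N * N) ^ k = N ^ (2 * k) := by rw [pow_mul, pow_two]
  rw [this]
  exact hC (2 * k) i j

lemma boundedNat_neg {N : Matrix (Fin 2) (Fin 2) ℝ} (h : BoundedNat N) :
    BoundedNat (-N) := by
  obtain ⟨C, hC⟩ := h
  refine ⟨C, fun k i j => ?_⟩
  rcases Nat.even_or_odd k with he | ho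
  · rw [he.neg_pow]; exact hC k i j
  · rw [ho.neg_pow, Matrix.neg_apply, abs_neg]; exact hC k i j

/-- trace recursion growth for hyperbolic matrices -/
lemma trace_pow_growth {A : Matrix (Fin 2) (Fin 2) ℝ} (hA : A.det = 1)
    (ht : 2 < A.trace) :
    ∀ k : ℕ, (2 + k * (A.trace - 2) ≤ (A ^ k).trace ∧
      (A ^ k).trace + (A.trace - 2) ≤ (A ^ (k + 1)).trace ∧ 2 ≤ (A ^ k).trace) := by
  intro k
  induction k with
  | zero =>
      refine ⟨by simp [Matrix.trace_one], ?_, by simp [Matrix.trace_one]⟩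
      rw [pow_zero, pow_one, Matrix.trace_one]
      simp only [Fintype.card_fin, Nat.cast_ofNat]
      linarith
  | succ n ih =>
      obtain ⟨h1, h2, h3⟩ := ih
      have hrec : (A ^ (n + 2)).trace = A.trace * (A ^ (n + 1)).trace - (A ^ n).trace := by
        have he : A ^ (n + 2) = A ^ n * (A * A) := by rw [pow_add, pow_two]
        rw [he, ch1 hA, Matrix.mul_sub, Matrix.mul_smul, Matrix.mul_one,
          trace_sub, trace_smul, smul_eq_mul, ← pow_succ]
      have h4 : 2 ≤ (A ^ (n + 1)).trace := by linarith
      refine ⟨by push_cast; linarith, ?_, h4⟩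
      rw [hrec]
      nlinarith

/-- a symplectic matrix with trace > 2 has unbounded powers -/
lemma not_boundedNat_hyperbolic {A : Matrix (Fin 2) (Fin 2) ℝ} (hA : A.det = 1)
    (ht : 2 < A.trace) : ¬ BoundedNat A := by
  rintro ⟨C, hC⟩
  obtain ⟨k, hk⟩ := exists_nat_gt ((2 * C) / (A.trace - 2))
  have h2 : 0 < A.trace - 2 := by linarith
  have hk2 : 2 * C < k * (A.trace - 2) := by
    rw [div_lt_iff₀ h2] at hk; linarith
  have hgr := (trace_pow_growth hA ht k).1
  have htr : (A ^ k).trace = (A ^ k) 0 0 + (A ^ k) 1 1 := Matrix.trace_fin_two _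
  have b1 := (abs_le.mp (hC k 0 0)).2
  have b2 := (abs_le.mp (hC k 1 1)).2
  have : (A ^ k).trace ≤ 2 * C := by rw [htr]; linarith
  linarith

/-- a symplectic matrix with trace = 2 that is not the identity has unbounded powers -/
lemma not_boundedNat_parabolic {A : Matrix (Fin 2) (Fin 2) ℝ} (hA : A.det = 1)
    (ht : A.trace = 2) (hne : A ≠ 1) : ¬ BoundedNat A := by
  set M := A - 1 with hMdef
  have h := ch1 hA
  rw [ht] at h
  have hM2 : M * M = 0 := by
    have e1 : M * M = A * A - (2 : ℝ) • A + 1 := by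
      rw [hMdef, two_smul]; noncomm_ring
    rw [e1, h]
    abel
  have hpow : ∀ k : ℕ, A ^ k = 1 + (k : ℝ) • M := by
    intro k
    induction k with
    | zero => simp
    | succ n ih =>
        have hA' : A = 1 + M := by rw [hMdef]; abel
        rw [pow_succ, ih, hA']
        simp only [mul_add, add_mul, one_mul, mul_one, smul_mul_assoc, hM2, smul_zero,
          add_zero]
        push_cast
        module
  obtain ⟨i, j, hij⟩ : ∃ i j, M i j ≠ 0 := by
    by_contra hc
    push_neg at hc
    apply hne
    ext i j
    have := hc i j
    rw [hMdef, Matrix.sub_apply, sub_eq_zero] at this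
    exact this
  rintro ⟨C, hC⟩
  obtain ⟨k, hk⟩ := exists_nat_gt ((C + 1) / |M i j|)
  have hm : 0 < |M i j| := abs_pos.mpr hij
  have hk2 : C + 1 < k * |M i j| := by rw [div_lt_iff₀ hm] at hk; linarith
  have hone : |(1 : Matrix (Fin 2) (Fin 2) ℝ) i j| ≤ 1 := by
    fin_cases i <;> fin_cases j <;> simp [Matrix.one_apply]
  have hv : (A ^ k) i j = (1 : Matrix (Fin 2) (Fin 2) ℝ) i j + (k : ℝ) * M i j := by
    rw [hpow k]; simp [Matrix.add_apply, Matrix.smul_apply, smul_eq_mul]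
  have hlow : (k : ℝ) * |M i j| - 1 ≤ |(A ^ k) i j| := by
    have : (k : ℝ) * |M i j| = |(k : ℝ) * M i j| := by
      rw [abs_mul, Nat.abs_cast]
    rw [this]
    calc |(k : ℝ) * M i j| - 1
        ≤ |(k : ℝ) * M i j| - |(1 : Matrix (Fin 2) (Fin 2) ℝ) i j| := by linarith
      _ ≤ |(1 : Matrix (Fin 2) (Fin 2) ℝ) i j + (k : ℝ) * M i j| := by
          have := abs_sub_abs_le_abs_sub ((k : ℝ) * M i j)
            (-((1 : Matrix (Fin 2) (Fin 2) ℝ) i j))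
          simp only [abs_neg, sub_neg_eq_add] at this
          calc |(k : ℝ) * M i j| - |(1 : Matrix (Fin 2) (Fin 2) ℝ) i j|
              ≤ |(k : ℝ) * M i j + (1 : Matrix (Fin 2) (Fin 2) ℝ) i j| := this
            _ = _ := by rw [add_comm]
      _ = |(A ^ k) i j| := by rw [hv]
  have := hC k i j
  linarith

lemma spec_mem_iff (A : Matrix (Fin 2) (Fin 2) ℝ) (hA : A.det = 1) (μ : ℂ) :
    μ ∈ spectrum ℂ (A.map (fun x => (x : ℂ))) ↔
      μ ^ 2 - (A.trace : ℂ) * μ + 1 = 0 := by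
  rw [spectrum.mem_iff, Matrix.isUnit_iff_isUnit_det, isUnit_iff_ne_zero, not_not]
  have hdet : ((A 0 0 : ℂ)) * ((A 1 1 : ℂ)) - ((A 0 1 : ℂ)) * ((A 1 0 : ℂ)) = 1 := by
    rw [Matrix.det_fin_two] at hA
    exact_mod_cast congrArg (fun x : ℝ => (x : ℂ)) hA
  have htr : (A.trace : ℂ) = (A 0 0 : ℂ) + (A 1 1 : ℂ) := by
    rw [Matrix.trace_fin_two]; push_cast; ring
  have hkey : (algebraMap ℂ (Matrix (Fin 2) (Fin 2) ℂ) μ - A.map (fun x => (x : ℂ))).det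
      = μ ^ 2 - (A.trace : ℂ) * μ + 1 := by
    rw [Matrix.det_fin_two]
    simp only [Matrix.sub_apply, Matrix.algebraMap_matrix_apply, Matrix.map_apply]
    norm_num
    rw [htr]
    linear_combination hdet
  rw [hkey]

lemma spec_iff_trace (A : Matrix (Fin 2) (Fin 2) ℝ) (hA : A.det = 1) :
    (∀ μ ∈ spectrum ℂ (A.map (fun x => (x : ℂ))),
        ‖μ‖ = 1 ∧ μ ≠ 1 ∧ μ ≠ -1) ↔ |A.trace| < 2 := by
  constructor
  · intro h
    by_contra hc
    push_neg at hc
    set t := A.trace with htdef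
    have ht4 : 4 ≤ t ^ 2 := by
      have := abs_nonneg t
      nlinarith [sq_abs t]
    set r : ℝ := (t + Real.sqrt (t ^ 2 - 4)) / 2 with hrdef
    have hs : Real.sqrt (t ^ 2 - 4) ^ 2 = t ^ 2 - 4 := Real.sq_sqrt (by linarith)
    have hroot : r ^ 2 - t * r + 1 = 0 := by
      rw [hrdef]
      field_simp
      nlinarith [hs]
    have hmem : (r : ℂ) ∈ spectrum ℂ (A.map (fun x => (x : ℂ))) := by
      rw [spec_mem_iff A hA]
      exact_mod_cast congrArg (fun x : ℝ => (x : ℂ)) hroot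
    obtain ⟨h1, h2, h3⟩ := h (r : ℂ) hmem
    rw [Complex.norm_real, Real.norm_eq_abs] at h1
    rcases abs_eq (by norm_num : (0:ℝ) ≤ 1) |>.mp h1 with hr1 | hr1
    · exact h2 (by rw [hr1]; norm_num)
    · exact h3 (by rw [hr1]; norm_num)
  · intro ht μ hmem
    rw [spec_mem_iff A hA] at hmem
    set t := A.trace with htdef
    have hnotreal : (starRingEnd ℂ) μ ≠ μ := by
      intro hconj
      obtain ⟨x, hx⟩ := Complex.conj_eq_iff_real.mp hconj
      rw [hx] at hmem
      have hxroot : x ^ 2 - t * x + 1 = 0 := by exact_mod_cast hmem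
      have h1 : t < 2 := (abs_lt.mp ht).2
      have h2 : -2 < t := (abs_lt.mp ht).1
      have hx0 : x ≤ 0 := by nlinarith [sq_nonneg (x - 1)]
      have hx0' : 0 ≤ x := by nlinarith [sq_nonneg (x + 1)]
      have : x = 0 := le_antisymm hx0 hx0'
      rw [this] at hxroot
      norm_num at hxroot
    have hconjroot : ((starRingEnd ℂ) μ) ^ 2 - (t : ℂ) * ((starRingEnd ℂ) μ) + 1 = 0 := by
      have := congrArg (starRingEnd ℂ) hmem
      simpa only [map_add, map_sub, _root_.map_mul, map_pow, _root_.map_one, map_zero,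
        Complex.conj_ofReal] using this
    have hfact : ((starRingEnd ℂ) μ - μ) * ((starRingEnd ℂ) μ + μ - t) = 0 := by
      linear_combination hconjroot - hmem
    have hsum : (starRingEnd ℂ) μ + μ - t = 0 := by
      rcases mul_eq_zero.mp hfact with h | h
      · exact absurd (sub_eq_zero.mp h) hnotreal
      · exact h
    have hprod : μ * (starRingEnd ℂ) μ = 1 := by
      have : (starRingEnd ℂ) μ = (t : ℂ) - μ := by linear_combination hsum
      rw [this]
      linear_combination -hmem
    have habs : ‖μ‖ = 1 := by
      have h1 : (Complex.normSq μ : ℂ) = 1 := by rw [← Complex.mul_conj]; exact hprod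
      have h2 : Complex.normSq μ = 1 := by exact_mod_cast h1
      rw [← Complex.sq_norm] at h2
      nlinarith [norm_nonneg μ, h2]
    refine ⟨habs, ?_, ?_⟩
    · rintro rfl
      have : (t : ℂ) = 2 := by linear_combination -hmem
      have ht2 : t = 2 := by exact_mod_cast this
      rw [ht2] at ht; norm_num at ht
    · rintro rfl
      have : (t : ℂ) = -2 := by linear_combination hmem
      have ht2 : t = -2 := by exact_mod_cast this
      rw [ht2] at ht; norm_num at ht

/-- strong stability implies |trace| < 2, and conversely -/
lemma stable_iff_trace (A : Matrix (Fin 2) (Fin 2) ℝ) (hA : A.det = 1) :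
    (∃ ε > 0, ∀ N : Matrix (Fin 2) (Fin 2) ℝ, N.det = 1 →
        (∀ i j, |A i j - N i j| < ε) →
        ∃ C, ∀ k : ℤ, ∀ i j, |(N ^ k) i j| ≤ C) ↔ |A.trace| < 2 := by
  constructor
  · rintro ⟨ε, hε, hS⟩
    by_contra hc
    push_neg at hc
    -- helper to apply hS
    have close_self : ∀ i j, |A i j - A i j| < ε := by intro i j; simpa using hε
    by_cases hA1 : A = 1
    · -- perturb the identity
      set δ := min ε 1 / 2 with hδdef
      have hδ0 : 0 < δ := by
        have := lt_min hε one_pos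
        simp only [hδdef]
        positivity
      have hδε : δ < ε := by
        have h1 : min ε 1 ≤ ε := min_le_left _ _
        simp only [hδdef]; linarith
      have hpos : (0:ℝ) < 1 + δ := by linarith
      set D : Matrix (Fin 2) (Fin 2) ℝ := !![1 + δ, 0; 0, (1 + δ)⁻¹] with hDdef
      have hdetD : D.det = 1 := by
        rw [hDdef, Matrix.det_fin_two_of]
        field_simp
        norm_num
      have hinv1 : 1 - δ < (1 + δ)⁻¹ := by
        rw [inv_eq_one_div, lt_div_iff₀ hpos]
        nlinarith
      have hinv2 : (1 + δ)⁻¹ ≤ 1 := by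
        rw [inv_le_one_iff₀]
        right; linarith
      have hcl : ∀ i j, |A i j - D i j| < ε := by
        intro i j
        rw [hA1]
        fin_cases i <;> fin_cases j <;>
          simp [hDdef, Matrix.one_apply] <;>
            first
              | linarith
              | (rw [abs_lt]; exact ⟨by linarith, by linarith⟩)
      have htrD : 2 < D.trace := by
        rw [hDdef, Matrix.trace_fin_two_of]
        linarith
      exact not_boundedNat_hyperbolic hdetD htrD (boundedNat_of_z (hS D hdetD hcl))
    · by_cases hA2 : A = -1
      · -- perturb minus the identity
        set δ := min ε 1 / 2 with hδdef
        have hδ0 : 0 < δ := by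
          simp only [hδdef]
          have := lt_min hε one_pos
          positivity
        have hδε : δ < ε := by
          have h1 : min ε 1 ≤ ε := min_le_left _ _
          simp only [hδdef]; linarith
        have hpos : (0:ℝ) < 1 + δ := by linarith
        set D : Matrix (Fin 2) (Fin 2) ℝ := !![1 + δ, 0; 0, (1 + δ)⁻¹] with hDdef
        have hdetD : D.det = 1 := by
          rw [hDdef, Matrix.det_fin_two_of]
          field_simp
          norm_num
        have hdetD' : (-D).det = 1 := by
          rw [Matrix.det_neg, hdetD]
          simp
        have hinv1 : 1 - δ < (1 + δ)⁻¹ := by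
          rw [inv_eq_one_div, lt_div_iff₀ hpos]
          nlinarith
        have hinv2 : (1 + δ)⁻¹ ≤ 1 := by
          rw [inv_le_one_iff₀]
          right; linarith
        have hcl : ∀ i j, |A i j - (-D) i j| < ε := by
          intro i j
          rw [hA2]
          fin_cases i <;> fin_cases j <;>
            simp [hDdef, Matrix.one_apply] <;>
              first
                | linarith
                | (rw [abs_lt]; exact ⟨by linarith, by linarith⟩)
        have htrD : 2 < D.trace := by
          rw [hDdef, Matrix.trace_fin_two_of]
          linarith
        have hb : BoundedNat (-D) := boundedNat_of_z (hS (-D) hdetD' hcl)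
        have hb2 : BoundedNat D := by
          have := boundedNat_neg hb
          rwa [neg_neg] at this
        exact not_boundedNat_hyperbolic hdetD htrD hb2
      · -- A itself (or a related matrix) has unbounded powers
        have hbA : BoundedNat A := boundedNat_of_z (hS A hA close_self)
        rcases le_abs.mp hc with h2t | h2t
        · rcases eq_or_lt_of_le h2t with heq | hlt
          · exact not_boundedNat_parabolic hA heq.symm hA1 hbA
          · exact not_boundedNat_hyperbolic hA hlt hbA
        · -- trace ≤ -2
          rcases eq_or_lt_of_le h2t with heq | hlt
          · -- trace = -2 : -A is parabolic
            have hdet' : (-A).det = 1 := by rw [Matrix.det_neg, hA]; simp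
            have htr' : (-A).trace = 2 := by rw [Matrix.trace_neg, ← heq]
            have hne' : -A ≠ 1 := by
              intro hcon
              apply hA2
              rw [← neg_neg A, hcon]
            exact not_boundedNat_parabolic hdet' htr' hne' (boundedNat_neg hbA)
          · -- trace < -2 : A * A is hyperbolic
            have hdet' : (A * A).det = 1 := by rw [Matrix.det_mul, hA]; ring
            have htr' : 2 < (A * A).trace := by
              rw [ch1 hA, trace_sub, trace_smul, trace_one, smul_eq_mul]
              simp only [Fintype.card_fin, Nat.cast_ofNat]
              nlinarith
            exact not_boundedNat_hyperbolic hdet' htr' (boundedNat_sq hbA)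
  · intro ht
    refine ⟨(2 - |A.trace|) / 2, by linarith, fun N hNdet hcl => ?_⟩
    apply elliptic_bounded hNdet
    have h00 := hcl 0 0
    have h11 := hcl 1 1
    have e : A.trace - N.trace = (A 0 0 - N 0 0) + (A 1 1 - N 1 1) := by
      rw [Matrix.trace_fin_two, Matrix.trace_fin_two]; ring
    have hdiff : |A.trace - N.trace| < 2 - |A.trace| := by
      rw [e]
      calc |(A 0 0 - N 0 0) + (A 1 1 - N 1 1)| ≤ |A 0 0 - N 0 0| + |A 1 1 - N 1 1| :=
            abs_add_le _ _
        _ < 2 - |A.trace| := by linarith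
    have h1 : |N.trace| - |A.trace| ≤ |N.trace - A.trace| := abs_sub_abs_le_abs_sub _ _
    rw [abs_sub_comm] at h1
    linarith

end SSaux

/-- A 2×2 real symplectic matrix `A` (`det A = 1`) is strongly stable
(all symplectic matrices in a neighborhood of `A` have bounded powers `{N^k}_{k∈ℤ}`)
iff its eigenvalues lie in `S¹ \ {±1}`, which is equivalent to `|tr A| < 2`. -/
theorem strong_stability_iff_elliptic
    (A : Matrix (Fin 2) (Fin 2) ℝ) (hA : A.det = 1) :
    ((∃ ε > 0, ∀ N : Matrix (Fin 2) (Fin 2) ℝ, N.det = 1 →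
        (∀ i j, |A i j - N i j| < ε) →
        ∃ C, ∀ k : ℤ, ∀ i j, |(N ^ k) i j| ≤ C) ↔
      (∀ μ ∈ spectrum ℂ (A.map (fun x => (x : ℂ))),
        ‖μ‖ = 1 ∧ μ ≠ 1 ∧ μ ≠ -1)) ∧
    ((∀ μ ∈ spectrum ℂ (A.map (fun x => (x : ℂ))),
        ‖μ‖ = 1 ∧ μ ≠ 1 ∧ μ ≠ -1) ↔ |A.trace| < 2) := by
  refine ⟨?_, SSaux.spec_iff_trace A hA⟩
  exact (SSaux.stable_iff_trace A hA).trans (SSaux.spec_iff_trace A hA).symm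
end

section
/- Let θ(t;ω) be the clockwise angular coordinate of the solution of Jz' = S(t)z starting at e^{−iω}, with θ(0;ω) = ω, and let r(t;ω) be the radial coordinate. Then ∂θ/∂ω (t;ω) = 1/r(t;ω)² for all t. -/
open Real Set Filter Topology

lemma vf_hasDerivAt (A B C x : ℝ) :
    HasDerivAt (fun x : ℝ => A * cos x ^ 2 + C * sin x ^ 2 - 2 * B * cos x * sin x)
      (2 * (C - A) * sin x * cos x - 2 * B * (cos x ^ 2 - sin x ^ 2)) x := by
  have hc := Real.hasDerivAt_cos x
  have hs := Real.hasDerivAt_sin x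
  have h := (((hc.pow 2).const_mul A).add ((hs.pow 2).const_mul C)).sub
    (((hc.mul hs)).const_mul (2 * B))
  convert h using 1
  · rfl
  · rfl
  · ext y; simp only [Pi.add_apply, Pi.sub_apply, Pi.mul_apply, Pi.pow_apply]; ring
  · push_cast; ring

lemma vf_lipschitz {M A B C : ℝ} (hA : |A| ≤ M) (hB : |B| ≤ M) (hC : |C| ≤ M) :
    LipschitzWith (Real.toNNReal (4 * M)) 
      (fun x : ℝ => A * cos x ^ 2 + C * sin x ^ 2 - 2 * B * cos x * sin x) := by
  have hM : 0 ≤ M := le_trans (abs_nonneg A) hA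
  apply lipschitzWith_of_nnnorm_deriv_le
  · exact fun x => (vf_hasDerivAt A B C x).differentiableAt
  · intro x
    rw [(vf_hasDerivAt A B C x).deriv, ← NNReal.coe_le_coe, coe_nnnorm,
      Real.coe_toNNReal _ (by positivity), Real.norm_eq_abs, abs_le]
    obtain ⟨hA1, hA2⟩ := abs_le.1 hA
    obtain ⟨hB1, hB2⟩ := abs_le.1 hB
    obtain ⟨hC1, hC2⟩ := abs_le.1 hC
    have h1 := sin_sq_add_cos_sq x
    have h2 := neg_one_le_sin x
    have h3 := sin_le_one x
    have h4 := neg_one_le_cos x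
    have h5 := cos_le_one x
    constructor <;> nlinarith [sq_nonneg (sin x - cos x), sq_nonneg (sin x + cos x), sq_nonneg (sin x), sq_nonneg (cos x)]

lemma ode_unique (a b c : ℝ → ℝ) (ha : Continuous a) (hb : Continuous b) (hc : Continuous c)
    (f g : ℝ → ℝ)
    (hf : ∀ s, HasDerivAt f (a s * cos (f s) ^ 2 + c s * sin (f s) ^ 2
      - 2 * b s * cos (f s) * sin (f s)) s)
    (hg : ∀ s, HasDerivAt g (a s * cos (g s) ^ 2 + c s * sin (g s) ^ 2
      - 2 * b s * cos (g s) * sin (g s)) s)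
    (t₀ : ℝ) (h0 : f t₀ = g t₀) (t : ℝ) : f t = g t := by
  set T : ℝ := |t| + |t₀| + 1 with hT
  have hT0 : (0:ℝ) < T := by positivity
  -- clamp
  set p : ℝ → ℝ := fun s => max (-T) (min T s) with hp
  have hpmem : ∀ s, p s ∈ Icc (-T) T := by
    intro s
    constructor
    · exact le_max_left _ _
    · exact max_le (by linarith) (min_le_left _ _)
  have hpeq : ∀ s ∈ Icc (-T) T, p s = s := by
    intro s hs
    rw [hp]
    simp only [min_eq_right hs.2, max_eq_right hs.1]
  -- bounds
  obtain ⟨Ma, hMa⟩ := isCompact_Icc.exists_bound_of_continuousOn (ha.continuousOn (s := Icc (-T) T))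
  obtain ⟨Mb, hMb⟩ := isCompact_Icc.exists_bound_of_continuousOn (hb.continuousOn (s := Icc (-T) T))
  obtain ⟨Mc, hMc⟩ := isCompact_Icc.exists_bound_of_continuousOn (hc.continuousOn (s := Icc (-T) T))
  set M : ℝ := |Ma| + |Mb| + |Mc| with hM
  have hMab : ∀ s, |a (p s)| ≤ M ∧ |b (p s)| ≤ M ∧ |c (p s)| ≤ M := by
    intro s
    have h1 := hMa _ (hpmem s); have h2 := hMb _ (hpmem s); have h3 := hMc _ (hpmem s)
    rw [Real.norm_eq_abs] at h1 h2 h3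
    refine ⟨?_, ?_, ?_⟩ <;>
      [skip; skip; skip] <;>
      · rw [hM]
        have := abs_nonneg (a (p s)); have := abs_nonneg (b (p s)); have := abs_nonneg (c (p s))
        have := le_abs_self Ma; have := le_abs_self Mb; have := le_abs_self Mc
        linarith
  -- clamped field
  set v : ℝ → ℝ → ℝ := fun s x => a (p s) * cos x ^ 2 + c (p s) * sin x ^ 2
      - 2 * b (p s) * cos x * sin x with hv
  have hlip : ∀ s, LipschitzOnWith (Real.toNNReal (4 * M)) (v s) univ := by
    intro s
    exact (vf_lipschitz (hMab s).1 (hMab s).2.1 (hMab s).2.2).lipschitzOnWith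
  have htmem : t ∈ Icc (-T) T := by
    constructor
    · linarith [neg_abs_le t, abs_nonneg t₀]
    · linarith [le_abs_self t, abs_nonneg t₀]
  have ht₀mem : t₀ ∈ Ioo (-T) T := by
    constructor
    · linarith [neg_abs_le t₀, abs_nonneg t]
    · linarith [le_abs_self t₀, abs_nonneg t]
  have h0Icc : Ioo (-T) T ⊆ Icc (-T) T := Ioo_subset_Icc_self
  have key := ODE_solution_unique_of_mem_Icc (v := v) (s := fun _ => (univ : Set ℝ))
    (fun s _ => (hlip s)) ht₀mem
    (fun s hs => ((hf s).continuousAt.continuousWithinAt))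
    (fun s hs => by rw [hv]; simp only [hpeq s (h0Icc hs)]; exact hf s)
    (fun s hs => mem_univ _)
    (fun s hs => ((hg s).continuousAt.continuousWithinAt))
    (fun s hs => by rw [hv]; simp only [hpeq s (h0Icc hs)]; exact hg s)
    (fun s hs => mem_univ _) h0
  exact key htmem

section Pack
variable (a b c : ℝ → ℝ)
    (ha : Continuous a) (hb : Continuous b) (hc : Continuous c)
    (θ r : ℝ → ℝ → ℝ)
    (hθ0 : ∀ ω, θ 0 ω = ω) (hr0 : ∀ ω, r 0 ω = 1)
    (hθ : ∀ ω t, HasDerivAt (fun s => θ s ω)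
      (a t * cos (θ t ω) ^ 2 + c t * sin (θ t ω) ^ 2
        - 2 * b t * cos (θ t ω) * sin (θ t ω)) t)
    (hr : ∀ ω t, HasDerivAt (fun s => r s ω)
      (- r t ω * (sin (θ t ω) * cos (θ t ω) * (c t - a t)
        - (cos (θ t ω) ^ 2 - sin (θ t ω) ^ 2) * b t)) t)

include ha hb hc hθ0 hθ in
lemma theta_shift_aux (w t : ℝ) : θ t (w + 2*π) = θ t w + 2*π := by
  have h := ode_unique a b c ha hb hc (fun s => θ s w + 2*π) (fun s => θ s (w + 2*π))
    (fun s => by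
      have := (hθ w s).add_const (2*π)
      simpa [Real.cos_add_two_pi, Real.sin_add_two_pi] using this)
    (hθ (w + 2*π)) 0 (by simp only [hθ0]) t
  simpa using h.symm

include ha hb hc hθ0 hθ in
lemma theta_mono_aux (w₁ w₂ t : ℝ) (hw : w₁ < w₂) : θ t w₁ < θ t w₂ := by
  by_contra hcon
  push_neg at hcon
  have hcont : Continuous (fun s => θ s w₂ - θ s w₁) := by
    have h1 : Continuous (fun s => θ s w₂) :=
      continuous_iff_continuousAt.2 (fun s => (hθ w₂ s).continuousAt)
    have h2 : Continuous (fun s => θ s w₁) :=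
      continuous_iff_continuousAt.2 (fun s => (hθ w₁ s).continuousAt)
    exact h1.sub h2
  have h0' : (0:ℝ) ∈ uIcc ((fun s => θ s w₂ - θ s w₁) 0) ((fun s => θ s w₂ - θ s w₁) t) := by
    simp only [hθ0]
    exact mem_uIcc.2 (Or.inr ⟨by linarith, by linarith⟩)
  obtain ⟨s, _, hzero⟩ := intermediate_value_uIcc (hcont.continuousOn) h0'
  have h := ode_unique a b c ha hb hc (fun u => θ u w₁) (fun u => θ u w₂)
    (hθ w₁) (hθ w₂) s (by simp only at hzero ⊢; linarith) 0
  rw [hθ0, hθ0] at h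
  linarith

include hθ0 hr0 hθ hr in
lemma conserved_aux (w₁ w₂ t : ℝ) :
    r t w₁ * r t w₂ * sin (θ t w₁ - θ t w₂) = sin (w₁ - w₂) := by
  have key : ∀ s, HasDerivAt (fun u => r u w₁ * r u w₂ * sin (θ u w₁ - θ u w₂)) 0 s := by
    intro s
    have H := ((hr w₁ s).mul (hr w₂ s)).mul (((hθ w₁ s).sub (hθ w₂ s)).sin)
    convert H using 1
    · rfl
    · rfl
    · rfl
    simp only [Pi.mul_apply, Pi.sub_apply]
    rw [Real.sin_sub, Real.cos_sub]
    have h1 := sin_sq_add_cos_sq (θ s w₁)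
    have h2 := sin_sq_add_cos_sq (θ s w₂)
    linear_combination (-(r s w₁ * r s w₂) * (a s * cos (θ s w₁) * cos (θ s w₂)
        - b s * cos (θ s w₁) * sin (θ s w₂) - b s * sin (θ s w₁) * cos (θ s w₂)
        + c s * sin (θ s w₁) * sin (θ s w₂))) * h1
      + ((r s w₁ * r s w₂) * (a s * cos (θ s w₁) * cos (θ s w₂)
        - b s * cos (θ s w₁) * sin (θ s w₂) - b s * sin (θ s w₁) * cos (θ s w₂)
        + c s * sin (θ s w₁) * sin (θ s w₂))) * h2
  have hconst := is_const_of_deriv_eq_zero (fun s => (key s).differentiableAt)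
    (fun s => (key s).deriv) t 0
  simpa [hθ0, hr0] using hconst

include ha hb hc hθ hr hr0 in
lemma r_pos_aux (w t : ℝ) : 0 < r t w := by
  have hθc : Continuous (fun s => θ s w) :=
    continuous_iff_continuousAt.2 (fun s => (hθ w s).continuousAt)
  set g : ℝ → ℝ := fun s => sin (θ s w) * cos (θ s w) * (c s - a s)
      - (cos (θ s w) ^ 2 - sin (θ s w) ^ 2) * b s with hgdef
  have hgc : Continuous g := by
    rw [hgdef]
    fun_prop
  have hI : ∀ u : ℝ, HasDerivAt (fun u => ∫ s in (0:ℝ)..u, g s) (g u) u := fun u =>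
    intervalIntegral.integral_hasDerivAt_right (hgc.intervalIntegrable 0 u)
      (hgc.stronglyMeasurableAtFilter _ _) hgc.continuousAt
  have key : ∀ u : ℝ, HasDerivAt (fun u => r u w * Real.exp (∫ s in (0:ℝ)..u, g s)) 0 u := by
    intro u
    have H := (hr w u).mul ((hI u).exp)
    convert H using 1
    · rfl
    · rfl
    · rfl
    rw [hgdef]
    ring
  have hconst := is_const_of_deriv_eq_zero (fun u => (key u).differentiableAt)
    (fun u => (key u).deriv) t 0
  simp only [intervalIntegral.integral_same, Real.exp_zero, hr0, one_mul, mul_one] at hconst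
  nlinarith [Real.exp_pos (∫ s in (0:ℝ)..t, g s), hconst]

end Pack

/-- For the clockwise polar coordinates `(r, θ)` of the solution of the
planar Hamiltonian system `J z' = S(t) z` starting at `e^{−iω}` (so `θ(0;ω) = ω`,
`r(0;ω) = 1`, and `θ`, `r` solve the polar ODEs associated with
`S(t) = (a b; b c)`), one has `∂θ/∂ω (t;ω) = 1/r(t;ω)²` for all `t`. -/
theorem deriv_theta_omega_eq_inv_r_sq
    (a b c : ℝ → ℝ)
    (ha : Continuous a) (hb : Continuous b) (hc : Continuous c)
    (θ r : ℝ → ℝ → ℝ)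
    (hθ0 : ∀ ω, θ 0 ω = ω) (hr0 : ∀ ω, r 0 ω = 1)
    (hθ : ∀ ω t, HasDerivAt (fun s => θ s ω)
      (a t * cos (θ t ω) ^ 2 + c t * sin (θ t ω) ^ 2
        - 2 * b t * cos (θ t ω) * sin (θ t ω)) t)
    (hr : ∀ ω t, HasDerivAt (fun s => r s ω)
      (- r t ω * (sin (θ t ω) * cos (θ t ω) * (c t - a t)
        - (cos (θ t ω) ^ 2 - sin (θ t ω) ^ 2) * b t)) t) :
    ∀ t ω, HasDerivAt (fun w => θ t w) (1 / (r t ω) ^ 2) ω := by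
  intro t ω
  have Rpos : ∀ w, 0 < r t w := fun w => r_pos_aux a b c ha hb hc θ r hr0 hθ hr w t
  have mono : ∀ w₁ w₂ t, w₁ < w₂ → θ t w₁ < θ t w₂ :=
    fun w₁ w₂ t hw => theta_mono_aux a b c ha hb hc θ hθ0 hθ w₁ w₂ t hw
  have shift : ∀ w t, θ t (w + 2*π) = θ t w + 2*π :=
    fun w t => theta_shift_aux a b c ha hb hc θ hθ0 hθ w t
  have conserved : ∀ w₁ w₂ t, r t w₁ * r t w₂ * sin (θ t w₁ - θ t w₂) = sin (w₁ - w₂) :=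
    fun w₁ w₂ t => conserved_aux a b c θ r hθ0 hr0 hθ hr w₁ w₂ t
  set β : ℝ := θ t (ω + π/2) - θ t ω with hβdef
  have hβ : r t (ω + π/2) * r t ω * sin β = 1 := by
    have h := conserved (ω + π/2) ω t
    rw [hβdef]
    rw [show ω + π/2 - ω = π/2 by ring, Real.sin_pi_div_two] at h
    exact h
  have hsinβpos : 0 < sin β := by
    by_contra hcon
    push_neg at hcon
    have h3 := mul_pos (Rpos (ω + π/2)) (Rpos ω)
    nlinarith
  -- explicit functions
  set A : ℝ → ℝ := fun w => sin (w - ω) / r t ω with hAdef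
  set Bf : ℝ → ℝ := fun w => -cos (w - ω) / r t (ω + π/2) with hBdef
  set Cf : ℝ → ℝ := fun w => (A w * cos β - Bf w) / sin β with hCdef
  -- identities
  have hsin : ∀ w, r t w * sin (θ t w - θ t ω) = A w := by
    intro w
    have h := conserved w ω t
    rw [hAdef]
    rw [eq_div_iff (ne_of_gt (Rpos ω))]
    linear_combination h
  have hsin' : ∀ w, r t w * sin (θ t w - θ t ω - β) = Bf w := by
    intro w
    have h := conserved w (ω + π/2) t
    rw [show w - (ω + π/2) = (w - ω) - π/2 by ring, Real.sin_sub_pi_div_two] at h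
    rw [show θ t w - θ t (ω + π/2) = θ t w - θ t ω - β by rw [hβdef]; ring] at h
    rw [hBdef, eq_div_iff (ne_of_gt (Rpos (ω + π/2)))]
    linear_combination h
  have hcos : ∀ w, r t w * cos (θ t w - θ t ω) = Cf w := by
    intro w
    have h1 := hsin w
    have h2 := hsin' w
    rw [Real.sin_sub] at h2
    rw [hCdef, eq_div_iff (ne_of_gt hsinβpos)]
    linear_combination cos β * h1 - h2
  have hAC : ∀ w, A w ^ 2 + Cf w ^ 2 = (r t w) ^ 2 := by
    intro w
    rw [← hsin w, ← hcos w]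
    have h3 := sin_sq_add_cos_sq (θ t w - θ t ω)
    linear_combination (r t w) ^ 2 * h3
  have hρ : ∀ w, Real.sqrt (A w ^ 2 + Cf w ^ 2) = r t w := by
    intro w
    rw [hAC w, Real.sqrt_sq (Rpos w).le]
  -- derivatives of A, Bf, Cf
  have hAd : ∀ w, HasDerivAt A (cos (w - ω) / r t ω) w := by
    intro w
    have h := (((hasDerivAt_id w).sub_const ω).sin).div_const (r t ω)
    simpa [hAdef] using h
  have hBd : ∀ w, HasDerivAt Bf (sin (w - ω) / r t (ω + π/2)) w := by
    intro w
    have h := ((((hasDerivAt_id w).sub_const ω).cos).neg).div_const (r t (ω + π/2))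
    simpa [hBdef] using h
  have hCd : ∀ w, HasDerivAt Cf
      ((cos (w - ω) / r t ω * cos β - sin (w - ω) / r t (ω + π/2)) / sin β) w := by
    intro w
    exact (((hAd w).mul_const (cos β)).sub (hBd w)).div_const _
  have hACne : A ω ^ 2 + Cf ω ^ 2 ≠ 0 := by
    rw [hAC ω]
    exact pow_ne_zero 2 (ne_of_gt (Rpos ω))
  obtain ⟨m, hρd⟩ : ∃ m, HasDerivAt (fun w => Real.sqrt (A w ^ 2 + Cf w ^ 2)) m ω :=
    ⟨_, (((hAd ω).pow 2).add ((hCd ω).pow 2)).sqrt hACne⟩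
  have hρω : Real.sqrt (A ω ^ 2 + Cf ω ^ 2) = r t ω := hρ ω
  have hne : r t ω * Real.sqrt (A ω ^ 2 + Cf ω ^ 2) ≠ 0 := by
    rw [hρω]
    exact ne_of_gt (mul_pos (Rpos ω) (Rpos ω))
  obtain ⟨m', hqd⟩ : ∃ m', HasDerivAt (fun w => (r t ω * Real.sqrt (A w ^ 2 + Cf w ^ 2))⁻¹) m' ω :=
    ⟨_, (hρd.const_mul (r t ω)).inv hne⟩
  have hhd : HasDerivAt (fun w => sin (w - ω) * (r t ω * Real.sqrt (A w ^ 2 + Cf w ^ 2))⁻¹)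
      ((r t ω * Real.sqrt (A ω ^ 2 + Cf ω ^ 2))⁻¹) ω := by
    have h1 := (((hasDerivAt_id ω).sub_const ω).sin).mul hqd
    simp at h1 ⊢; exact h1
  have hω0 : sin (ω - ω) * (r t ω * Real.sqrt (A ω ^ 2 + Cf ω ^ 2))⁻¹ = 0 := by simp
  have harc : HasDerivAt
      (fun w => θ t ω + Real.arcsin (sin (w - ω) * (r t ω * Real.sqrt (A w ^ 2 + Cf w ^ 2))⁻¹))
      ((r t ω * Real.sqrt (A ω ^ 2 + Cf ω ^ 2))⁻¹) ω := by
    have hd := (Real.hasDerivAt_arcsin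
        (x := sin (ω - ω) * (r t ω * Real.sqrt (A ω ^ 2 + Cf ω ^ 2))⁻¹)
        (by rw [hω0]; norm_num) (by rw [hω0]; norm_num)).comp ω hhd
    have he : (1:ℝ) / Real.sqrt (1 - (sin (ω - ω) * (r t ω * Real.sqrt (A ω ^ 2 + Cf ω ^ 2))⁻¹) ^ 2)
        * (r t ω * Real.sqrt (A ω ^ 2 + Cf ω ^ 2))⁻¹
        = (r t ω * Real.sqrt (A ω ^ 2 + Cf ω ^ 2))⁻¹ := by
      rw [hω0]
      simp
    rw [he] at hd
    exact hd.const_add (θ t ω)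
  -- pointwise identity for sin of the angle difference
  have hαsin : ∀ w, sin (θ t w - θ t ω)
      = sin (w - ω) * (r t ω * Real.sqrt (A w ^ 2 + Cf w ^ 2))⁻¹ := by
    intro w
    have h1 := hsin w
    rw [hρ w]
    have h2 : sin (θ t w - θ t ω) = A w / r t w := by
      rw [eq_div_iff (ne_of_gt (Rpos w))]
      linear_combination h1
    rw [h2, hAdef]
    simp only
    rw [div_div, div_eq_mul_inv]
  -- cos of angle difference is eventually > 1/2
  have hCfω : Cf ω = r t ω := by
    have h := hcos ω
    simpa using h.symm
  have hcosF : ContinuousAt (fun w => Cf w / Real.sqrt (A w ^ 2 + Cf w ^ 2)) ω :=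
    (hCd ω).continuousAt.div hρd.continuousAt (by rw [hρω]; exact ne_of_gt (Rpos ω))
  have hcoseq : ∀ w, cos (θ t w - θ t ω) = Cf w / Real.sqrt (A w ^ 2 + Cf w ^ 2) := by
    intro w
    rw [hρ w, eq_div_iff (ne_of_gt (Rpos w))]
    linear_combination hcos w
  have hFev : ∀ᶠ w in 𝓝 ω, 1/2 < cos (θ t w - θ t ω) := by
    have hF1 : Cf ω / Real.sqrt (A ω ^ 2 + Cf ω ^ 2) = 1 := by
      rw [hρω, hCfω, div_self (ne_of_gt (Rpos ω))]
    have hgt : ∀ᶠ y in 𝓝 (Cf ω / Real.sqrt (A ω ^ 2 + Cf ω ^ 2)), (1:ℝ)/2 < y := by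
      rw [hF1]
      exact eventually_gt_nhds (by norm_num)
    filter_upwards [hcosF.eventually hgt] with w hw
    rwa [hcoseq w]
  have hball : ∀ᶠ w in 𝓝 ω, |w - ω| < π := by
    filter_upwards [Metric.ball_mem_nhds ω Real.pi_pos] with w hw
    rwa [Metric.mem_ball, Real.dist_eq] at hw
  -- the angle bound
  have hαbound : ∀ w, |w - ω| < π → 1/2 < cos (θ t w - θ t ω) → |θ t w - θ t ω| ≤ π/2 := by
    intro w hw hcosw
    have hπ := Real.pi_pos
    obtain ⟨hw1, hw2⟩ := abs_lt.1 hw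
    have habs : |θ t w - θ t ω| < π := by
      rcases lt_trichotomy w ω with hlt | heq | hgt
      · have hα0 : θ t w < θ t ω := mono w ω t hlt
        have hα2 : θ t ω - 2*π < θ t w := by
          have h1 : θ t (ω - 2*π) < θ t w := mono _ _ t (by linarith)
          have h2 := shift (ω - 2*π) t
          rw [show (ω - 2*π) + 2*π = ω by ring] at h2
          linarith
        have hsneg : sin (θ t w - θ t ω) < 0 := by
          rw [hαsin w, hρ w]
          have h1 : sin (w - ω) < 0 :=
            Real.sin_neg_of_neg_of_neg_pi_lt (by linarith) (by linarith)
          have h2 : (0:ℝ) < (r t ω * r t w)⁻¹ := inv_pos.2 (mul_pos (Rpos ω) (Rpos w))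
          exact mul_neg_of_neg_of_pos h1 h2
        rw [abs_lt]
        constructor
        · by_contra hcon
          push_neg at hcon
          have h3 : sin ((θ t w - θ t ω) + π) ≤ 0 :=
            Real.sin_nonpos_of_nonpos_of_neg_pi_le (by linarith) (by linarith)
          rw [Real.sin_add_pi] at h3
          linarith
        · linarith
      · rw [heq]
        simpa using hπ
      · have hα0 : θ t ω < θ t w := mono ω w t hgt
        have hα2 : θ t w < θ t ω + 2*π := by
          have h1 : θ t w < θ t (ω + 2*π) := mono _ _ t (by linarith)
          have h2 := shift ω t
          linarith
        have hspos : 0 < sin (θ t w - θ t ω) := by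
          rw [hαsin w, hρ w]
          have h1 : 0 < sin (w - ω) := Real.sin_pos_of_pos_of_lt_pi (by linarith) (by linarith)
          have h2 : (0:ℝ) < (r t ω * r t w)⁻¹ := inv_pos.2 (mul_pos (Rpos ω) (Rpos w))
          exact mul_pos h1 h2
        rw [abs_lt]
        constructor
        · linarith
        · by_contra hcon
          push_neg at hcon
          have h3 : 0 ≤ sin ((θ t w - θ t ω) - π) :=
            Real.sin_nonneg_of_nonneg_of_le_pi (by linarith) (by linarith)
          rw [Real.sin_sub_pi] at h3
          linarith
    by_contra hcon
    push_neg at hcon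
    have h4 : cos |θ t w - θ t ω| ≤ 0 :=
      Real.cos_nonpos_of_pi_div_two_le_of_le hcon.le (by linarith)
    rw [Real.cos_abs] at h4
    linarith
  -- eventual identity
  have hev : (fun w => θ t w) =ᶠ[𝓝 ω]
      (fun w => θ t ω + Real.arcsin (sin (w - ω) * (r t ω * Real.sqrt (A w ^ 2 + Cf w ^ 2))⁻¹)) := by
    filter_upwards [hFev, hball] with w h1 h2
    have hb := hαbound w h2 h1
    obtain ⟨hb1, hb2⟩ := abs_le.1 hb
    rw [← hαsin w, Real.arcsin_sin (by linarith) (by linarith)]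
    ring
  have final := harc.congr_of_eventuallyEq hev
  convert final using 1
  · rfl
  · rfl
  rw [hρω, one_div, sq]
end

section
/- Define the winding number η_T(ω) = (θ(T;ω) − ω)/(2π) for the solution of Jz' = S(t)z starting at e^{−iω}. Then η_T(ω) ∈ ℤ if and only if e^{−iω} is an eigenvector of the monodromy matrix M(T) with positive eigenvalue, and η_T(ω) ∈ ℤ + 1/2 if and only if e^{−iω} is an eigenvector of M(T) with negative eigenvalue. -/
open Matrix Real

/-- The standard 2×2 symplectic matrix `J`. -/
def Jmat : Matrix (Fin 2) (Fin 2) ℝ := !![0, -1; 1, 0]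

lemma cos_sin_eq_iff_aux (x y : ℝ) :
    (Real.cos x = Real.cos y ∧ Real.sin x = Real.sin y) ↔ ∃ n : ℤ, x = y + n * (2 * π) := by
  constructor
  · rintro ⟨hcos, hsin⟩
    have h : Complex.exp (x * Complex.I) = Complex.exp (y * Complex.I) := by
      rw [Complex.exp_mul_I, Complex.exp_mul_I]
      rw [show Complex.cos x = Complex.cos y by
        rw [← Complex.ofReal_cos, ← Complex.ofReal_cos, hcos]]
      rw [show Complex.sin x = Complex.sin y by
        rw [← Complex.ofReal_sin, ← Complex.ofReal_sin, hsin]]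
    rw [Complex.exp_eq_exp_iff_exists_int] at h
    obtain ⟨n, hn⟩ := h
    refine ⟨n, ?_⟩
    have : (x : ℂ) = ((y + n * (2 * π) : ℝ) : ℂ) := by
      have hI : (x : ℂ) * Complex.I = ((y + n * (2 * π) : ℝ) : ℂ) * Complex.I := by
        push_cast
        rw [hn]; ring
      exact mul_right_cancel₀ Complex.I_ne_zero hI
    exact_mod_cast this
  · rintro ⟨n, rfl⟩
    constructor
    · simpa [mul_comm] using Real.cos_add_int_mul_two_pi y n
    · simpa [mul_comm] using Real.sin_add_int_mul_two_pi y n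

lemma pos_of_linear_ode_aux (f : ℝ → ℝ) (hf : Continuous f) (r : ℝ → ℝ) (hr0 : r 0 = 1)
    (hr : ∀ t, HasDerivAt r (r t * f t) t) : ∀ t, 0 < r t := by
  set F : ℝ → ℝ := fun t => ∫ s in (0:ℝ)..t, f s with hFdef
  have hF : ∀ t, HasDerivAt F (f t) t := fun t =>
    (hf.integral_hasStrictDerivAt 0 t).hasDerivAt
  have hg : ∀ t, HasDerivAt (fun t => r t * Real.exp (-F t)) 0 t := by
    intro t
    have h1 := (hr t).fun_mul (((hF t).fun_neg).exp)
    refine h1.congr_deriv ?_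
    ring
  have hconst : ∀ t, r t * Real.exp (-F t) = 1 := by
    have := is_const_of_deriv_eq_zero (f := fun t => r t * Real.exp (-F t))
      (fun t => (hg t).differentiableAt) (fun t => (hg t).deriv)
    intro t
    have h0 : r 0 * Real.exp (-F 0) = 1 := by
      simp [hFdef, hr0]
    simpa [h0] using this t 0
  intro t
  have h := hconst t
  nlinarith [Real.exp_pos (-F t), Real.exp_pos (F t)]

/-- With `η_T(ω) = (θ(T;ω) − ω)/(2π)` the winding number of the solution
of `J z' = S(t) z` starting at `e^{−iω}`, `η_T(ω) ∈ ℤ` iff `e^{−iω}` is an eigenvector of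
the monodromy matrix `M(T)` with positive eigenvalue, and `η_T(ω) ∈ ℤ + 1/2` iff it is an
eigenvector of `M(T)` with negative eigenvalue. -/
theorem winding_integer_iff_eigenvector
    (T : ℝ) (hT : 0 < T)
    (a b c : ℝ → ℝ)
    (ha : Continuous a) (hb : Continuous b) (hc : Continuous c)
    (haper : ∀ t, a (t + T) = a t) (hbper : ∀ t, b (t + T) = b t)
    (hcper : ∀ t, c (t + T) = c t)
    (θ r : ℝ → ℝ → ℝ)
    (hθ0 : ∀ ω, θ 0 ω = ω) (hr0 : ∀ ω, r 0 ω = 1)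
    (hθ : ∀ ω t, HasDerivAt (fun s => θ s ω)
      (a t * cos (θ t ω) ^ 2 + c t * sin (θ t ω) ^ 2
        - 2 * b t * cos (θ t ω) * sin (θ t ω)) t)
    (hr : ∀ ω t, HasDerivAt (fun s => r s ω)
      (- r t ω * (sin (θ t ω) * cos (θ t ω) * (c t - a t)
        - (cos (θ t ω) ^ 2 - sin (θ t ω) ^ 2) * b t)) t)
    (M : ℝ → Matrix (Fin 2) (Fin 2) ℝ)
    (hM : ∀ t ω, (M t).mulVec ![cos ω, -sin ω] =
      ![r t ω * cos (θ t ω), -(r t ω * sin (θ t ω))]) :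
    ∀ ω : ℝ,
      ((∃ n : ℤ, (θ T ω - ω) / (2 * π) = n) ↔
        ∃ μ : ℝ, 0 < μ ∧ (M T).mulVec ![cos ω, -sin ω] = μ • ![cos ω, -sin ω]) ∧
      ((∃ n : ℤ, (θ T ω - ω) / (2 * π) = n + 1 / 2) ↔
        ∃ μ : ℝ, μ < 0 ∧ (M T).mulVec ![cos ω, -sin ω] = μ • ![cos ω, -sin ω]) := by
  intro ω
  have hπ : (π : ℝ) ≠ 0 := Real.pi_ne_zero
  -- positivity of r
  have hθdiff : Differentiable ℝ (fun t => θ t ω) := fun t => (hθ ω t).differentiableAt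
  have hθcont : Continuous (fun t => θ t ω) := hθdiff.continuous
  have hrpos : 0 < r T ω := by
    refine pos_of_linear_ode_aux
      (fun t => -(sin (θ t ω) * cos (θ t ω) * (c t - a t)
        - (cos (θ t ω) ^ 2 - sin (θ t ω) ^ 2) * b t)) ?_ (fun t => r t ω) (hr0 ω) ?_ T
    · fun_prop
    · intro t
      have := hr ω t
      convert this using 1
      ring
  -- componentwise description of the eigen-equation
  have hcomp : ∀ μ : ℝ, ((M T).mulVec ![cos ω, -sin ω] = μ • ![cos ω, -sin ω]) ↔
      (r T ω * cos (θ T ω) = μ * cos ω ∧ r T ω * sin (θ T ω) = μ * sin ω) := by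
    intro μ
    rw [hM]
    constructor
    · intro h
      constructor
      · simpa using congrFun h 0
      · have := congrFun h 1
        simp at this
        linarith
    · rintro ⟨h1, h2⟩
      funext i
      fin_cases i
      · simpa using h1
      · simp
        linarith
  have hpyth1 := Real.sin_sq_add_cos_sq (θ T ω)
  have hpyth2 := Real.sin_sq_add_cos_sq ω
  constructor
  · -- integer winding ↔ positive eigenvalue
    constructor
    · rintro ⟨n, hn⟩
      have hθT : θ T ω = ω + n * (2 * π) := by
        field_simp at hn
        linarith
      obtain ⟨hcos, hsin⟩ := (cos_sin_eq_iff_aux (θ T ω) ω).mpr ⟨n, hθT⟩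
      exact ⟨r T ω, hrpos, (hcomp _).mpr ⟨by rw [hcos], by rw [hsin]⟩⟩
    · rintro ⟨μ, hμ, hvec⟩
      obtain ⟨h1, h2⟩ := (hcomp μ).mp hvec
      have hsq : r T ω ^ 2 = μ ^ 2 := by
        have e1 : (r T ω * cos (θ T ω)) ^ 2 = (μ * cos ω) ^ 2 := by rw [h1]
        have e2 : (r T ω * sin (θ T ω)) ^ 2 = (μ * sin ω) ^ 2 := by rw [h2]
        have l : r T ω ^ 2 * (sin (θ T ω) ^ 2 + cos (θ T ω) ^ 2)
            = μ ^ 2 * (sin ω ^ 2 + cos ω ^ 2) := by linear_combination e1 + e2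
        rw [hpyth1, hpyth2] at l
        simpa using l
      have hrμ : r T ω = μ := by
        have hz : (r T ω - μ) * (r T ω + μ) = 0 := by linear_combination hsq
        rcases mul_eq_zero.mp hz with h | h <;> linarith
      have hcos : cos (θ T ω) = cos ω := by
        rw [hrμ] at h1
        exact mul_left_cancel₀ (ne_of_gt hμ) h1
      have hsin : sin (θ T ω) = sin ω := by
        rw [hrμ] at h2
        exact mul_left_cancel₀ (ne_of_gt hμ) h2
      obtain ⟨n, hn⟩ := (cos_sin_eq_iff_aux (θ T ω) ω).mp ⟨hcos, hsin⟩
      refine ⟨n, ?_⟩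
      rw [hn]
      field_simp
      ring
  · -- half-integer winding ↔ negative eigenvalue
    constructor
    · rintro ⟨n, hn⟩
      have hθT : θ T ω = (ω + π) + n * (2 * π) := by
        field_simp at hn
        linarith
      obtain ⟨hcos, hsin⟩ := (cos_sin_eq_iff_aux (θ T ω) (ω + π)).mpr ⟨n, hθT⟩
      refine ⟨-(r T ω), by linarith, (hcomp _).mpr ⟨?_, ?_⟩⟩
      · rw [hcos, Real.cos_add]; simp
      · rw [hsin, Real.sin_add]; simp
    · rintro ⟨μ, hμ, hvec⟩
      obtain ⟨h1, h2⟩ := (hcomp μ).mp hvec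
      have hsq : r T ω ^ 2 = μ ^ 2 := by
        have e1 : (r T ω * cos (θ T ω)) ^ 2 = (μ * cos ω) ^ 2 := by rw [h1]
        have e2 : (r T ω * sin (θ T ω)) ^ 2 = (μ * sin ω) ^ 2 := by rw [h2]
        have l : r T ω ^ 2 * (sin (θ T ω) ^ 2 + cos (θ T ω) ^ 2)
            = μ ^ 2 * (sin ω ^ 2 + cos ω ^ 2) := by linear_combination e1 + e2
        rw [hpyth1, hpyth2] at l
        simpa using l
      have hrμ : r T ω = -μ := by
        have hz : (r T ω - μ) * (r T ω + μ) = 0 := by linear_combination hsq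
        rcases mul_eq_zero.mp hz with h | h <;> linarith
      have hμ' : μ ≠ 0 := ne_of_lt hμ
      have hcos : cos (θ T ω) = cos (ω + π) := by
        rw [hrμ] at h1
        have hc : cos (θ T ω) = -cos ω :=
          mul_left_cancel₀ hμ' (by linarith : μ * cos (θ T ω) = μ * -cos ω)
        rw [hc, Real.cos_add]; simp
      have hsin : sin (θ T ω) = sin (ω + π) := by
        rw [hrμ] at h2
        have hs : sin (θ T ω) = -sin ω :=
          mul_left_cancel₀ hμ' (by linarith : μ * sin (θ T ω) = μ * -sin ω)
        rw [hs, Real.sin_add]; simp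
      obtain ⟨n, hn⟩ := (cos_sin_eq_iff_aux (θ T ω) (ω + π)).mp ⟨hcos, hsin⟩
      refine ⟨n, ?_⟩
      rw [hn]
      field_simp
      ring
end

section
/- With η_T(ω) = (θ(T;ω) − ω)/(2π) the winding number of the solution of Jz' = S(t)z starting at e^{−iω}, the solution z(t; e^{−iω}) is T-periodic if and only if η_T(ω) ∈ ℤ and η_T'(ω) = 0, and T-antiperiodic if and only if η_T(ω) ∈ ℤ + 1/2 and η_T'(ω) = 0. -/
open Real Set

section Helpers

lemma abs_cos_sub_cos_le (x y : ℝ) : |cos x - cos y| ≤ |x - y| := by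
  rw [Real.cos_sub_cos]
  rw [abs_mul, abs_mul, abs_neg]
  have h1 : |sin ((x + y) / 2)| ≤ 1 := abs_le.2 ⟨neg_one_le_sin _, sin_le_one _⟩
  have h2 : |sin ((x - y) / 2)| ≤ |(x - y) / 2| := abs_sin_le_abs
  calc |(2:ℝ)| * |sin ((x + y) / 2)| * |sin ((x - y) / 2)|
      ≤ |(2:ℝ)| * 1 * |(x - y) / 2| := by
        apply mul_le_mul (mul_le_mul le_rfl h1 (abs_nonneg _) (abs_nonneg _)) h2
          (abs_nonneg _) (by positivity)
    _ = |x - y| := by rw [abs_div]; norm_num; ring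

lemma abs_sin_sub_sin_le (x y : ℝ) : |sin x - sin y| ≤ |x - y| := by
  rw [Real.sin_sub_sin]
  rw [abs_mul, abs_mul]
  have h1 : |cos ((x + y) / 2)| ≤ 1 := abs_le.2 ⟨neg_one_le_cos _, cos_le_one _⟩
  have h2 : |sin ((x - y) / 2)| ≤ |(x - y) / 2| := abs_sin_le_abs
  calc |(2:ℝ)| * |sin ((x - y) / 2)| * |cos ((x + y) / 2)|
      ≤ |(2:ℝ)| * |(x - y) / 2| * 1 := by
        apply mul_le_mul (mul_le_mul le_rfl h2 (abs_nonneg _) (abs_nonneg _)) h1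
          (abs_nonneg _) (by positivity)
    _ = |x - y| := by rw [abs_div]; norm_num; ring

private lemma mem_uIcc_abs {u v x : ℝ} (hx : x ∈ Set.uIcc v u) : |x - v| ≤ |u - v| := by
  rcases le_total v u with h | h
  · rw [Set.uIcc_of_le h] at hx
    rw [abs_of_nonneg (by linarith [hx.1]), abs_of_nonneg (by linarith)]
    linarith [hx.2]
  · rw [Set.uIcc_of_ge h] at hx
    rw [abs_of_nonpos (by linarith [hx.2]), abs_of_nonpos (by linarith)]
    linarith [hx.1]

lemma cos_taylor (u v : ℝ) : |cos u - cos v + sin v * (u - v)| ≤ (u - v) ^ 2 := by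
  have key := Convex.norm_image_sub_le_of_norm_hasDerivWithin_le
    (f := fun x => cos x + sin v * x) (f' := fun x => -sin x + sin v)
    (s := Set.uIcc v u) (C := |u - v|)
    (fun x _ => ((Real.hasDerivAt_cos x).add
      ((hasDerivAt_id x).const_mul (sin v))).hasDerivWithinAt.congr_deriv (by ring))
    (fun x hx => by
      rw [Real.norm_eq_abs]
      calc |(-sin x + sin v)| = |sin v - sin x| := by
            rw [show -sin x + sin v = sin v - sin x from by ring]
        _ ≤ |v - x| := _root_.abs_sin_sub_sin_le v x
        _ ≤ |u - v| := by rw [abs_sub_comm]; exact mem_uIcc_abs hx)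
    (convex_uIcc v u) Set.left_mem_uIcc Set.right_mem_uIcc
  rw [Real.norm_eq_abs, Real.norm_eq_abs] at key
  calc |cos u - cos v + sin v * (u - v)|
      = |(cos u + sin v * u) - (cos v + sin v * v)| := by ring_nf
    _ ≤ |u - v| * |u - v| := key
    _ = (u - v) ^ 2 := by rw [← abs_mul, ← sq, abs_of_nonneg (sq_nonneg _)]

lemma sin_taylor (u v : ℝ) : |sin u - sin v - cos v * (u - v)| ≤ (u - v) ^ 2 := by
  have key := Convex.norm_image_sub_le_of_norm_hasDerivWithin_le
    (f := fun x => sin x - cos v * x) (f' := fun x => cos x - cos v)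
    (s := Set.uIcc v u) (C := |u - v|)
    (fun x _ => ((Real.hasDerivAt_sin x).sub
      ((hasDerivAt_id x).const_mul (cos v))).hasDerivWithinAt.congr_deriv (by ring))
    (fun x hx => by
      rw [Real.norm_eq_abs]
      calc |cos x - cos v| ≤ |x - v| := _root_.abs_cos_sub_cos_le x v
        _ ≤ |u - v| := mem_uIcc_abs hx)
    (convex_uIcc v u) Set.left_mem_uIcc Set.right_mem_uIcc
  rw [Real.norm_eq_abs, Real.norm_eq_abs] at key
  calc |sin u - sin v - cos v * (u - v)|
      = |(sin u - cos v * u) - (sin v - cos v * v)| := by ring_nf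
    _ ≤ |u - v| * |u - v| := key
    _ = (u - v) ^ 2 := by rw [← abs_mul, ← sq, abs_of_nonneg (sq_nonneg _)]

/-- the angular vector field -/
noncomputable def Fd (a b c : ℝ → ℝ) (t x : ℝ) : ℝ :=
  a t * cos x ^ 2 + c t * sin x ^ 2 - 2 * b t * cos x * sin x

/-- the radial logarithmic derivative -/
noncomputable def Gd (a b c : ℝ → ℝ) (t x : ℝ) : ℝ :=
  sin x * cos x * (c t - a t) - (cos x ^ 2 - sin x ^ 2) * b t

lemma F_double_angle (A B C x : ℝ) :
    A * cos x ^ 2 + C * sin x ^ 2 - 2 * B * cos x * sin x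
      = (A + C) / 2 + ((A - C) / 2) * cos (2 * x) - B * sin (2 * x) := by
  rw [Real.cos_two_mul, Real.sin_two_mul]
  linear_combination C * Real.sin_sq_add_cos_sq x

lemma G_double_angle (A B C x : ℝ) :
    2 * (sin x * cos x * (C - A) - (cos x ^ 2 - sin x ^ 2) * B)
      = (C - A) * sin (2 * x) - 2 * B * cos (2 * x) := by
  rw [Real.sin_two_mul, Real.cos_two_mul]
  linear_combination (2 * B) * Real.sin_sq_add_cos_sq x

lemma Fd_lip (a b c : ℝ → ℝ) (t x y : ℝ) :
    |Fd a b c t x - Fd a b c t y| ≤ (|a t - c t| + 2 * |b t|) * |x - y| := by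
  show |(a t * cos x ^ 2 + c t * sin x ^ 2 - 2 * b t * cos x * sin x)
      - (a t * cos y ^ 2 + c t * sin y ^ 2 - 2 * b t * cos y * sin y)| ≤ _
  rw [F_double_angle (a t) (b t) (c t) x, F_double_angle (a t) (b t) (c t) y]
  have h3 : |2 * x - 2 * y| = 2 * |x - y| := by
    rw [show (2 * x - 2 * y) = 2 * (x - y) from by ring, abs_mul]; norm_num
  have h1 : |cos (2 * x) - cos (2 * y)| ≤ 2 * |x - y| := h3 ▸ _root_.abs_cos_sub_cos_le (2*x) (2*y)
  have h2 : |sin (2 * x) - sin (2 * y)| ≤ 2 * |x - y| := h3 ▸ _root_.abs_sin_sub_sin_le (2*x) (2*y)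
  calc |((a t + c t) / 2 + ((a t - c t) / 2) * cos (2 * x) - b t * sin (2 * x))
        - ((a t + c t) / 2 + ((a t - c t) / 2) * cos (2 * y) - b t * sin (2 * y))|
      = |((a t - c t) / 2) * (cos (2 * x) - cos (2 * y))
          - b t * (sin (2 * x) - sin (2 * y))| := by congr 1; ring
    _ ≤ |((a t - c t) / 2) * (cos (2 * x) - cos (2 * y))|
          + |b t * (sin (2 * x) - sin (2 * y))| := abs_sub _ _
    _ = (|a t - c t| / 2) * |cos (2 * x) - cos (2 * y)|
          + |b t| * |sin (2 * x) - sin (2 * y)| := by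
        rw [abs_mul, abs_mul, abs_div, abs_two]
    _ ≤ (|a t - c t| / 2) * (2 * |x - y|) + |b t| * (2 * |x - y|) := by
        gcongr
    _ = (|a t - c t| + 2 * |b t|) * |x - y| := by ring

lemma Fd_taylor (a b c : ℝ → ℝ) (t x y : ℝ) :
    |Fd a b c t x - Fd a b c t y - 2 * Gd a b c t y * (x - y)|
      ≤ (2 * |a t - c t| + 4 * |b t|) * (x - y) ^ 2 := by
  show |(a t * cos x ^ 2 + c t * sin x ^ 2 - 2 * b t * cos x * sin x)
      - (a t * cos y ^ 2 + c t * sin y ^ 2 - 2 * b t * cos y * sin y)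
      - 2 * (sin y * cos y * (c t - a t) - (cos y ^ 2 - sin y ^ 2) * b t) * (x - y)| ≤ _
  rw [F_double_angle (a t) (b t) (c t) x, F_double_angle (a t) (b t) (c t) y,
    show (2 * (sin y * cos y * (c t - a t) - (cos y ^ 2 - sin y ^ 2) * b t) * (x - y))
      = ((c t - a t) * sin (2 * y) - 2 * b t * cos (2 * y)) * (x - y) from by
        rw [G_double_angle]]
  have h1 : |cos (2 * x) - cos (2 * y) + sin (2 * y) * (2 * x - 2 * y)| ≤ 4 * (x - y) ^ 2 := by
    calc |cos (2*x) - cos (2*y) + sin (2*y) * (2*x - 2*y)| ≤ (2*x - 2*y)^2 :=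
          cos_taylor (2 * x) (2 * y)
      _ = 4 * (x - y)^2 := by ring
  have h2 : |sin (2 * x) - sin (2 * y) - cos (2 * y) * (2 * x - 2 * y)| ≤ 4 * (x - y) ^ 2 := by
    calc |sin (2*x) - sin (2*y) - cos (2*y) * (2*x - 2*y)| ≤ (2*x - 2*y)^2 :=
          sin_taylor (2 * x) (2 * y)
      _ = 4 * (x - y)^2 := by ring
  calc |((a t + c t) / 2 + ((a t - c t) / 2) * cos (2 * x) - b t * sin (2 * x))
        - ((a t + c t) / 2 + ((a t - c t) / 2) * cos (2 * y) - b t * sin (2 * y))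
        - ((c t - a t) * sin (2 * y) - 2 * b t * cos (2 * y)) * (x - y)|
      = |((a t - c t) / 2) * (cos (2 * x) - cos (2 * y) + sin (2 * y) * (2 * x - 2 * y))
          - b t * (sin (2 * x) - sin (2 * y) - cos (2 * y) * (2 * x - 2 * y))| := by
        congr 1; ring
    _ ≤ |((a t - c t) / 2) * (cos (2 * x) - cos (2 * y) + sin (2 * y) * (2 * x - 2 * y))|
          + |b t * (sin (2 * x) - sin (2 * y) - cos (2 * y) * (2 * x - 2 * y))| := abs_sub _ _
    _ = (|a t - c t| / 2) * |cos (2 * x) - cos (2 * y) + sin (2 * y) * (2 * x - 2 * y)|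
          + |b t| * |sin (2 * x) - sin (2 * y) - cos (2 * y) * (2 * x - 2 * y)| := by
        rw [abs_mul, abs_mul, abs_div, abs_two]
    _ ≤ (|a t - c t| / 2) * (4 * (x - y) ^ 2) + |b t| * (4 * (x - y) ^ 2) := by
        gcongr
    _ = (2 * |a t - c t| + 4 * |b t|) * (x - y) ^ 2 := by ring

lemma Gd_bound (a b c : ℝ → ℝ) (t y : ℝ) :
    |2 * Gd a b c t y| ≤ |a t - c t| + 2 * |b t| := by
  show |2 * (sin y * cos y * (c t - a t) - (cos y ^ 2 - sin y ^ 2) * b t)| ≤ _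
  rw [G_double_angle]
  calc |(c t - a t) * sin (2 * y) - 2 * b t * cos (2 * y)|
      ≤ |(c t - a t) * sin (2 * y)| + |2 * b t * cos (2 * y)| := abs_sub _ _
    _ = |c t - a t| * |sin (2 * y)| + 2 * |b t| * |cos (2 * y)| := by
        rw [abs_mul, abs_mul, abs_mul, abs_two]
    _ ≤ |c t - a t| * 1 + 2 * |b t| * 1 := by
        gcongr
        · exact abs_le.2 ⟨neg_one_le_sin _, sin_le_one _⟩
        · exact abs_le.2 ⟨neg_one_le_cos _, cos_le_one _⟩
    _ = |a t - c t| + 2 * |b t| := by rw [abs_sub_comm]; ring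

lemma neg_one_zpow_sq (m : ℤ) : ((-1:ℝ) ^ m) * ((-1:ℝ) ^ m) = 1 := by
  rw [← zpow_add₀ (by norm_num : (-1:ℝ) ≠ 0)]
  exact Even.neg_one_zpow ⟨m, rfl⟩

lemma Fd_shift (a b c : ℝ → ℝ) (t y : ℝ) (m : ℤ) :
    Fd a b c t (y + m * π) = Fd a b c t y := by
  show a t * cos (y + m * π) ^ 2 + c t * sin (y + m * π) ^ 2
      - 2 * b t * cos (y + m * π) * sin (y + m * π)
    = a t * cos y ^ 2 + c t * sin y ^ 2 - 2 * b t * cos y * sin y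
  rw [Real.sin_add_int_mul_pi, Real.cos_add_int_mul_pi]
  linear_combination (a t * cos y ^ 2 + c t * sin y ^ 2 - 2 * b t * cos y * sin y)
    * neg_one_zpow_sq m

lemma Gd_shift (a b c : ℝ → ℝ) (t y : ℝ) (m : ℤ) :
    Gd a b c t (y + m * π) = Gd a b c t y := by
  show sin (y + m * π) * cos (y + m * π) * (c t - a t)
      - (cos (y + m * π) ^ 2 - sin (y + m * π) ^ 2) * b t
    = sin y * cos y * (c t - a t) - (cos y ^ 2 - sin y ^ 2) * b t
  rw [Real.sin_add_int_mul_pi, Real.cos_add_int_mul_pi]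
  linear_combination (sin y * cos y * (c t - a t) - (cos y ^ 2 - sin y ^ 2) * b t)
    * neg_one_zpow_sq m

end Helpers

/-- With `η_T(ω) = (θ(T;ω) − ω)/(2π)` the winding number of the solution
`z(t;e^{−iω}) = r e^{−iθ}` of `J z' = S(t) z`, the solution is `T`-periodic iff
`η_T(ω) ∈ ℤ` and `η_T'(ω) = 0`, and `T`-antiperiodic iff `η_T(ω) ∈ ℤ + 1/2` and
`η_T'(ω) = 0`. -/
theorem periodic_iff_winding_integer_and_critical
    (T : ℝ) (hT : 0 < T)
    (a b c : ℝ → ℝ)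
    (ha : Continuous a) (hb : Continuous b) (hc : Continuous c)
    (haper : ∀ t, a (t + T) = a t) (hbper : ∀ t, b (t + T) = b t)
    (hcper : ∀ t, c (t + T) = c t)
    (θ r : ℝ → ℝ → ℝ)
    (hθ0 : ∀ ω, θ 0 ω = ω) (hr0 : ∀ ω, r 0 ω = 1)
    (hθ : ∀ ω t, HasDerivAt (fun s => θ s ω)
      (a t * cos (θ t ω) ^ 2 + c t * sin (θ t ω) ^ 2
        - 2 * b t * cos (θ t ω) * sin (θ t ω)) t)
    (hr : ∀ ω t, HasDerivAt (fun s => r s ω)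
      (- r t ω * (sin (θ t ω) * cos (θ t ω) * (c t - a t)
        - (cos (θ t ω) ^ 2 - sin (θ t ω) ^ 2) * b t)) t) :
    ∀ ω : ℝ,
      ((∀ t, r (t + T) ω * cos (θ (t + T) ω) = r t ω * cos (θ t ω) ∧
             r (t + T) ω * sin (θ (t + T) ω) = r t ω * sin (θ t ω)) ↔
        ((∃ n : ℤ, (θ T ω - ω) / (2 * π) = n) ∧
          HasDerivAt (fun w => (θ T w - w) / (2 * π)) 0 ω)) ∧
      ((∀ t, r (t + T) ω * cos (θ (t + T) ω) = -(r t ω * cos (θ t ω)) ∧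
             r (t + T) ω * sin (θ (t + T) ω) = -(r t ω * sin (θ t ω))) ↔
        ((∃ n : ℤ, (θ T ω - ω) / (2 * π) = n + 1 / 2) ∧
          HasDerivAt (fun w => (θ T w - w) / (2 * π)) 0 ω)) := by
  -- restate the derivative hypotheses via `Fd` and `Gd`
  have hθ2 : ∀ ω t, HasDerivAt (fun s => θ s ω) (Fd a b c t (θ t ω)) t := hθ
  have hr2 : ∀ ω t, HasDerivAt (fun s => r s ω) (-r t ω * Gd a b c t (θ t ω)) t := hr
  have hπ2 : (2 * π) ≠ 0 := by positivity
  -- global Lipschitz bound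
  obtain ⟨K, hK1, hKb⟩ : ∃ K : ℝ, 1 ≤ K ∧ ∀ t, |a t - c t| + 2 * |b t| ≤ K := by
    have hcont : Continuous (fun t => |a t - c t| + 2 * |b t|) :=
      ((ha.sub hc).abs.add (continuous_const.mul hb.abs))
    have hper : Function.Periodic (fun t => |a t - c t| + 2 * |b t|) T := by
      intro t; simp only [haper t, hbper t, hcper t]
    obtain ⟨x₀, hx₀, hmax⟩ := isCompact_Icc.exists_isMaxOn (α := ℝ)
      ⟨0, Set.left_mem_Icc.2 hT.le⟩ hcont.continuousOn
    refine ⟨max (|a x₀ - c x₀| + 2 * |b x₀|) 1, le_max_right _ _, fun t => ?_⟩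
    obtain ⟨y, hy, hEq⟩ := hper.exists_mem_Ico₀ hT t
    rw [hEq]
    exact le_trans (hmax ⟨hy.1, hy.2.le⟩) (le_max_left _ _)
  have hK0 : (0:ℝ) < K := by linarith
  -- continuity in time
  have hθcont : ∀ ω, Continuous fun t => θ t ω := fun ω =>
    continuous_iff_continuousAt.2 fun t => (hθ ω t).continuousAt
  have hrcont : ∀ ω, Continuous fun t => r t ω := fun ω =>
    continuous_iff_continuousAt.2 fun t => (hr ω t).continuousAt
  have hGcont : ∀ ω, Continuous fun t => Gd a b c t (θ t ω) := by
    intro ω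
    unfold Gd
    exact (((Real.continuous_sin.comp (hθcont ω)).mul
        (Real.continuous_cos.comp (hθcont ω))).mul (hc.sub ha)).sub
      ((((Real.continuous_cos.comp (hθcont ω)).pow 2).sub
        ((Real.continuous_sin.comp (hθcont ω)).pow 2)).mul hb)
  -- the radial part is a positive exponential
  have hρd : ∀ ω t, HasDerivAt (fun u => ∫ s in (0:ℝ)..u, Gd a b c s (θ s ω))
      (Gd a b c t (θ t ω)) t := fun ω t =>
    ((hGcont ω).integral_hasStrictDerivAt 0 t).hasDerivAt
  have hrexp : ∀ ω t, r t ω = Real.exp (-(∫ s in (0:ℝ)..t, Gd a b c s (θ s ω))) := by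
    intro ω t
    have hφd : ∀ s, HasDerivAt
        (fun u => r u ω * Real.exp (∫ x in (0:ℝ)..u, Gd a b c x (θ x ω))) 0 s := by
      intro s
      have h := (hr2 ω s).mul ((hρd ω s).exp)
      refine h.congr_deriv ?_
      ring
    have hconst := is_const_of_deriv_eq_zero
      (fun s => (hφd s).differentiableAt) (fun s => (hφd s).deriv) t 0
    rw [hr0, intervalIntegral.integral_same, Real.exp_zero, mul_one] at hconst
    have hexp := Real.exp_ne_zero (∫ x in (0:ℝ)..t, Gd a b c x (θ x ω))
    field_simp [Real.exp_neg] at hconst ⊢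
    rw [Real.exp_neg]
    exact eq_inv_of_mul_eq_one_left (by linarith [hconst])
  have hrpos : ∀ ω t, 0 < r t ω := fun ω t => by rw [hrexp ω t]; exact Real.exp_pos _
  -- derivative of the inverse squared radius
  have hEd : ∀ ω t, HasDerivAt (fun s => (r s ω ^ 2)⁻¹)
      (2 * Gd a b c t (θ t ω) * (r t ω ^ 2)⁻¹) t := by
    intro ω t
    have h1 : HasDerivAt (fun s => r s ω ^ 2)
        ((2:ℕ) * r t ω ^ 1 * (-r t ω * Gd a b c t (θ t ω))) t := (hr2 ω t).pow 2
    have h2 := h1.inv (pow_ne_zero 2 (hrpos ω t).ne')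
    refine h2.congr_deriv ?_
    have hrne := (hrpos ω t).ne'
    field_simp
    ring
  -- differentiability of the flow with respect to the initial angle
  have bigDeriv : ∀ ω, HasDerivAt (fun w => θ T w) ((r T ω ^ 2)⁻¹) ω := by
    intro ω
    have hCc1 : 1 ≤ Real.exp (K * T) := Real.one_le_exp (by positivity)
    set Cc := Real.exp (K * T) with hCc
    have key : ∀ w, |θ T w - θ T ω - (w - ω) * (r T ω ^ 2)⁻¹|
        ≤ (2 * K * Cc ^ 3) * (w - ω) ^ 2 := by
      intro w
      -- first Grönwall estimate
      have hu : ∀ x ∈ Set.Icc (0:ℝ) T, ‖θ x w - θ x ω‖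
          ≤ gronwallBound (|w - ω|) K 0 (x - 0) := by
        apply norm_le_gronwallBound_of_norm_deriv_right_le
          (f' := fun t => Fd a b c t (θ t w) - Fd a b c t (θ t ω))
        · exact ((hθcont w).sub (hθcont ω)).continuousOn
        · exact fun x _ => ((hθ2 w x).sub (hθ2 ω x)).hasDerivWithinAt
        · simp [hθ0, Real.norm_eq_abs]
        · intro x _
          rw [Real.norm_eq_abs, Real.norm_eq_abs, add_zero]
          calc |Fd a b c x (θ x w) - Fd a b c x (θ x ω)|
              ≤ (|a x - c x| + 2 * |b x|) * |θ x w - θ x ω| := Fd_lip a b c x _ _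
            _ ≤ K * |θ x w - θ x ω| :=
              mul_le_mul_of_nonneg_right (hKb x) (abs_nonneg _)
      have hu' : ∀ x ∈ Set.Icc (0:ℝ) T, |θ x w - θ x ω| ≤ |w - ω| * Cc := by
        intro x hx
        have h := hu x hx
        rw [gronwallBound_ε0, Real.norm_eq_abs, sub_zero] at h
        refine h.trans (mul_le_mul_of_nonneg_left ?_ (abs_nonneg _))
        exact Real.exp_le_exp.2 (mul_le_mul_of_nonneg_left hx.2 hK0.le)
      -- second Grönwall estimate
      have hv : ∀ x ∈ Set.Icc (0:ℝ) T,
          ‖(θ x w - θ x ω) - (w - ω) * (r x ω ^ 2)⁻¹‖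
          ≤ gronwallBound 0 K (2 * K * (|w - ω| * Cc) ^ 2) (x - 0) := by
        apply norm_le_gronwallBound_of_norm_deriv_right_le
          (f := fun t => (θ t w - θ t ω) - (w - ω) * (r t ω ^ 2)⁻¹)
          (f' := fun t => (Fd a b c t (θ t w) - Fd a b c t (θ t ω))
            - (w - ω) * (2 * Gd a b c t (θ t ω) * (r t ω ^ 2)⁻¹))
        · exact (((hθcont w).sub (hθcont ω)).sub (continuous_const.mul
            (((hrcont ω).pow 2).inv₀ fun t => pow_ne_zero 2 (hrpos ω t).ne'))).continuousOn
        · exact fun x _ =>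
            (((hθ2 w x).sub (hθ2 ω x)).sub ((hEd ω x).const_mul (w - ω))).hasDerivWithinAt
        · simp [hθ0, hr0]
        · intro x hx
          have e1 : (Fd a b c x (θ x w) - Fd a b c x (θ x ω))
              - (w - ω) * (2 * Gd a b c x (θ x ω) * (r x ω ^ 2)⁻¹)
              = (Fd a b c x (θ x w) - Fd a b c x (θ x ω)
                  - 2 * Gd a b c x (θ x ω) * (θ x w - θ x ω))
                + 2 * Gd a b c x (θ x ω)
                  * ((θ x w - θ x ω) - (w - ω) * (r x ω ^ 2)⁻¹) := by ring
          rw [Real.norm_eq_abs, Real.norm_eq_abs, e1]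
          have hR : |Fd a b c x (θ x w) - Fd a b c x (θ x ω)
              - 2 * Gd a b c x (θ x ω) * (θ x w - θ x ω)|
              ≤ 2 * K * (|w - ω| * Cc) ^ 2 := by
            have h7 : (θ x w - θ x ω) ^ 2 ≤ (|w - ω| * Cc) ^ 2 := by
              rw [← sq_abs]
              exact pow_le_pow_left₀ (abs_nonneg _) (hu' x (Set.Ico_subset_Icc_self hx)) 2
            have h8 : 2 * |a x - c x| + 4 * |b x| ≤ 2 * K := by
              have := hKb x; linarith
            calc |Fd a b c x (θ x w) - Fd a b c x (θ x ω)
                - 2 * Gd a b c x (θ x ω) * (θ x w - θ x ω)|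
                ≤ (2 * |a x - c x| + 4 * |b x|) * (θ x w - θ x ω) ^ 2 :=
                  Fd_taylor a b c x _ _
              _ ≤ (2 * K) * (|w - ω| * Cc) ^ 2 :=
                  mul_le_mul h8 h7 (sq_nonneg _) (by positivity)
              _ = 2 * K * (|w - ω| * Cc) ^ 2 := by ring
          have hp : |2 * Gd a b c x (θ x ω)| ≤ K := (Gd_bound a b c x _).trans (hKb x)
          calc |(Fd a b c x (θ x w) - Fd a b c x (θ x ω)
                  - 2 * Gd a b c x (θ x ω) * (θ x w - θ x ω))
                + 2 * Gd a b c x (θ x ω)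
                  * ((θ x w - θ x ω) - (w - ω) * (r x ω ^ 2)⁻¹)|
              ≤ |Fd a b c x (θ x w) - Fd a b c x (θ x ω)
                  - 2 * Gd a b c x (θ x ω) * (θ x w - θ x ω)|
                + |2 * Gd a b c x (θ x ω)
                  * ((θ x w - θ x ω) - (w - ω) * (r x ω ^ 2)⁻¹)| := abs_add_le _ _
            _ = |Fd a b c x (θ x w) - Fd a b c x (θ x ω)
                  - 2 * Gd a b c x (θ x ω) * (θ x w - θ x ω)|
                + |2 * Gd a b c x (θ x ω)|
                  * |(θ x w - θ x ω) - (w - ω) * (r x ω ^ 2)⁻¹| := by rw [abs_mul]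
            _ ≤ 2 * K * (|w - ω| * Cc) ^ 2
                + K * |(θ x w - θ x ω) - (w - ω) * (r x ω ^ 2)⁻¹| :=
                add_le_add hR (mul_le_mul_of_nonneg_right hp (abs_nonneg _))
            _ = K * |(θ x w - θ x ω) - (w - ω) * (r x ω ^ 2)⁻¹|
                + 2 * K * (|w - ω| * Cc) ^ 2 := by ring
      have hvT := hv T ⟨hT.le, le_refl T⟩
      rw [gronwallBound_of_K_ne_0 hK0.ne', Real.norm_eq_abs, sub_zero] at hvT
      have harith : 0 * Real.exp (K * T)
          + 2 * K * (|w - ω| * Cc) ^ 2 / K * (Real.exp (K * T) - 1)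
          ≤ 2 * K * Cc ^ 3 * (w - ω) ^ 2 := by
        rw [zero_mul, zero_add]
        have hd : 2 * K * (|w - ω| * Cc) ^ 2 / K = 2 * (|w - ω| * Cc) ^ 2 := by
          field_simp
        rw [hd, ← hCc]
        have hsq : (|w - ω| * Cc) ^ 2 = (w - ω) ^ 2 * Cc ^ 2 := by
          rw [mul_pow, sq_abs]
        rw [hsq]
        have hfac : Cc - 1 ≤ K * Cc := by
          nlinarith [mul_nonneg (sub_nonneg.2 hK1) (le_trans zero_le_one hCc1)]
        calc 2 * ((w - ω) ^ 2 * Cc ^ 2) * (Cc - 1)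
            ≤ 2 * ((w - ω) ^ 2 * Cc ^ 2) * (K * Cc) :=
              mul_le_mul_of_nonneg_left hfac (by positivity)
          _ = 2 * K * Cc ^ 3 * (w - ω) ^ 2 := by ring
      have hhr1 : r T ω ^ 2 ≠ 0 := pow_ne_zero 2 (hrpos ω T).ne'
      calc |θ T w - θ T ω - (w - ω) * (r T ω ^ 2)⁻¹| ≤ _ := hvT
        _ ≤ 2 * K * Cc ^ 3 * (w - ω) ^ 2 := harith
    -- conclude differentiability
    rw [hasDerivAt_iff_isLittleO]
    have h1 : (fun w => θ T w - θ T ω - (w - ω) • (r T ω ^ 2)⁻¹)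
        =O[nhds ω] (fun w => (w - ω) ^ 2) := by
      apply Asymptotics.isBigO_of_le' (c := 2 * K * Cc ^ 3)
      intro w
      rw [Real.norm_eq_abs, Real.norm_eq_abs, smul_eq_mul,
        abs_of_nonneg (sq_nonneg (w - ω))]
      exact key w
    apply h1.trans_isLittleO
    have h2 : (fun w : ℝ => (w - ω)) =o[nhds ω] (fun _ => (1:ℝ)) := by
      rw [Asymptotics.isLittleO_one_iff]
      have := ((continuous_id.sub (continuous_const (y := ω))).tendsto ω)
      simpa [Pi.sub_def] using this
    have h3 := h2.mul_isBigO (Asymptotics.isBigO_refl (fun w : ℝ => w - ω) (nhds ω))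
    simpa [pow_two] using h3
  -- derivative of the winding number
  have ηderiv : ∀ ω, HasDerivAt (fun w => (θ T w - w) / (2 * π))
      (((r T ω ^ 2)⁻¹ - 1) / (2 * π)) ω := fun ω =>
    ((bigDeriv ω).sub (hasDerivAt_id ω)).div_const _
  -- from a vanishing derivative we get r T ω = 1
  have hback : ∀ ω, HasDerivAt (fun w => (θ T w - w) / (2 * π)) 0 ω → r T ω = 1 := by
    intro ω hd
    have h := (ηderiv ω).unique hd
    have h' : (r T ω ^ 2)⁻¹ - 1 = 0 := by
      rcases div_eq_zero_iff.1 h with h' | h'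
      · exact h'
      · exact absurd h' hπ2
    have h2 : (r T ω ^ 2)⁻¹ = 1 := by linarith
    have h3 : r T ω ^ 2 = 1 := by
      rw [← inv_inv (r T ω ^ 2), h2]; norm_num
    have h4 : (r T ω - 1) * (r T ω + 1) = 0 := by linear_combination h3
    rcases mul_eq_zero.1 h4 with h5 | h5
    · linarith
    · exfalso; linarith [hrpos ω T]
  -- time-periodicity and π-shift invariance of the vector fields
  have FdT : ∀ s x, Fd a b c (s + T) x = Fd a b c s x := by
    intro s x; unfold Fd; rw [haper s, hbper s, hcper s]
  have GdT : ∀ s x, Gd a b c (s + T) x = Gd a b c s x := by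
    intro s x; unfold Gd; rw [haper s, hbper s, hcper s]
  -- angular shift
  have shiftθ : ∀ ω (m : ℤ), θ T ω = ω + m * π → ∀ t, θ (t + T) ω = θ t ω + m * π := by
    intro ω m hm t
    have hlip : ∀ s : ℝ, LipschitzOnWith K.toNNReal
        (fun x => Fd a b c s x) Set.univ := by
      intro s
      apply LipschitzWith.lipschitzOnWith
      apply LipschitzWith.of_dist_le_mul
      intro x y
      rw [Real.dist_eq, Real.dist_eq, Real.coe_toNNReal _ hK0.le]
      exact (Fd_lip a b c s x y).trans
        (mul_le_mul_of_nonneg_right (hKb s) (abs_nonneg _))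
    have h0A : (0:ℝ) ∈ Set.Ioo (-(|t| + 1)) (|t| + 1) := by
      constructor <;> [nlinarith [abs_nonneg t]; nlinarith [abs_nonneg t]]
    have htA : t ∈ Set.Icc (-(|t| + 1)) (|t| + 1) :=
      ⟨by nlinarith [neg_abs_le t], by nlinarith [le_abs_self t]⟩
    have huniq := ODE_solution_unique_of_mem_Icc
      (v := fun s x => Fd a b c s x) (s := fun _ => Set.univ) (K := K.toNNReal)
      (fun s _ => hlip s) h0A
      (f := fun s => θ (s + T) ω - m * π) (g := fun s => θ s ω)
      (((hθcont ω).comp (continuous_id.add continuous_const)).sub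
        continuous_const).continuousOn
      (fun s _ => by
        have h := ((hθ2 ω (s + T)).comp_add_const s T).sub_const (m * π)
        convert h using 1
        calc Fd a b c s (θ (s + T) ω - m * π)
            = Fd a b c s ((θ (s + T) ω - m * π) + m * π) :=
              (Fd_shift a b c s _ m).symm
          _ = Fd a b c (s + T) (θ (s + T) ω) := by
              rw [show (θ (s + T) ω - m * π) + m * π = θ (s + T) ω from by ring, FdT])
      (fun _ _ => Set.mem_univ _)
      (hθcont ω).continuousOn
      (fun s _ => hθ2 ω s)
      (fun _ _ => Set.mem_univ _)
      (by show θ (0 + T) ω - ↑m * π = θ 0 ω; rw [zero_add, hm, hθ0]; ring)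
    have h6 : θ (t + T) ω - ↑m * π = θ t ω := huniq htA
    linarith
  -- radial shift
  have shiftr : ∀ ω (m : ℤ), (∀ t, θ (t + T) ω = θ t ω + m * π) → r T ω = 1 →
      ∀ t, r (t + T) ω = r t ω := by
    intro ω m hsh hr1 t
    have gshift : ∀ s, Gd a b c (s + T) (θ (s + T) ω) = Gd a b c s (θ s ω) := by
      intro s; rw [hsh s, Gd_shift, GdT]
    have hint : ∀ u v : ℝ, IntervalIntegrable (fun s => Gd a b c s (θ s ω))
        MeasureTheory.volume u v := fun u v => (hGcont ω).intervalIntegrable u v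
    have hρT : (∫ s in (0:ℝ)..T, Gd a b c s (θ s ω)) = 0 := by
      have h := hrexp ω T
      rw [hr1] at h
      have := (Real.exp_eq_one_iff _).1 h.symm
      linarith
    have hadd : (∫ s in (0:ℝ)..(t + T), Gd a b c s (θ s ω))
        = (∫ s in (0:ℝ)..T, Gd a b c s (θ s ω))
          + ∫ s in T..(t + T), Gd a b c s (θ s ω) :=
      (intervalIntegral.integral_add_adjacent_intervals (hint 0 T) (hint T (t + T))).symm
    have hcomp : (∫ s in T..(t + T), Gd a b c s (θ s ω))
        = ∫ s in (0:ℝ)..t, Gd a b c (s + T) (θ (s + T) ω) := by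
      have := intervalIntegral.integral_comp_add_right
        (a := (0:ℝ)) (b := t) (fun s => Gd a b c s (θ s ω)) T
      rw [zero_add] at this
      exact this.symm
    have hshiftint : (∫ s in (0:ℝ)..t, Gd a b c (s + T) (θ (s + T) ω))
        = ∫ s in (0:ℝ)..t, Gd a b c s (θ s ω) := by
      simp only [gshift]
    rw [hrexp ω (t + T), hrexp ω t, hadd, hρT, hcomp, hshiftint, zero_add]
  intro ω
  constructor
  · -- periodic case
    constructor
    · intro hp
      obtain ⟨h1, h2⟩ := hp 0
      rw [zero_add, hθ0, hr0, one_mul] at h1 h2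
      have hq1 : (r T ω * cos (θ T ω)) ^ 2 = cos ω ^ 2 := by rw [h1]
      have hq2 : (r T ω * sin (θ T ω)) ^ 2 = sin ω ^ 2 := by rw [h2]
      have hsq : r T ω ^ 2 = 1 := by
        linear_combination hq1 + hq2 - (r T ω) ^ 2 * Real.sin_sq_add_cos_sq (θ T ω)
          + Real.sin_sq_add_cos_sq ω
      have h4 : (r T ω - 1) * (r T ω + 1) = 0 := by linear_combination hsq
      have hrT : r T ω = 1 := by
        rcases mul_eq_zero.1 h4 with h5 | h5
        · linarith
        · exfalso; linarith [hrpos ω T]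
      rw [hrT, one_mul] at h1 h2
      have hone : cos (θ T ω - ω) = 1 := by
        rw [Real.cos_sub, h1, h2]
        linear_combination Real.sin_sq_add_cos_sq ω
      obtain ⟨n, hn⟩ := (Real.cos_eq_one_iff _).1 hone
      refine ⟨⟨n, ?_⟩, ?_⟩
      · rw [← hn]
        field_simp
      · have h := ηderiv ω
        rw [hrT] at h
        simpa using h
    · rintro ⟨⟨n, hn⟩, hd⟩
      have hrT : r T ω = 1 := hback ω hd
      have hm : θ T ω = ω + ((2 * n : ℤ) : ℝ) * π := by
        field_simp at hn
        push_cast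
        linarith
      have hsh := shiftθ ω (2 * n) hm
      have hshr := shiftr ω (2 * n) hsh hrT
      intro t
      have h5 := hsh t
      have hcast : ((2 * n : ℤ) : ℝ) * π = (n : ℝ) * (2 * π) := by push_cast; ring
      rw [h5, hshr t, hcast]
      rw [Real.cos_add_int_mul_two_pi, Real.sin_add_int_mul_two_pi]
      exact ⟨rfl, rfl⟩
  · -- antiperiodic case
    constructor
    · intro hp
      obtain ⟨h1, h2⟩ := hp 0
      rw [zero_add, hθ0, hr0, one_mul] at h1 h2
      have hq1 : (r T ω * cos (θ T ω)) ^ 2 = cos ω ^ 2 := by rw [h1]; ring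
      have hq2 : (r T ω * sin (θ T ω)) ^ 2 = sin ω ^ 2 := by rw [h2]; ring
      have hsq : r T ω ^ 2 = 1 := by
        linear_combination hq1 + hq2 - (r T ω) ^ 2 * Real.sin_sq_add_cos_sq (θ T ω)
          + Real.sin_sq_add_cos_sq ω
      have h4 : (r T ω - 1) * (r T ω + 1) = 0 := by linear_combination hsq
      have hrT : r T ω = 1 := by
        rcases mul_eq_zero.1 h4 with h5 | h5
        · linarith
        · exfalso; linarith [hrpos ω T]
      rw [hrT, one_mul] at h1 h2
      have hone : cos (θ T ω - ω) = -1 := by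
        rw [Real.cos_sub, h1, h2]
        linear_combination -Real.sin_sq_add_cos_sq ω
      obtain ⟨k, hk⟩ := Real.cos_eq_neg_one_iff.1 hone
      refine ⟨⟨k, ?_⟩, ?_⟩
      · rw [← hk]
        field_simp
        ring
      · have h := ηderiv ω
        rw [hrT] at h
        simpa using h
    · rintro ⟨⟨n, hn⟩, hd⟩
      have hrT : r T ω = 1 := hback ω hd
      have hm : θ T ω = ω + ((2 * n + 1 : ℤ) : ℝ) * π := by
        field_simp at hn
        push_cast
        linarith
      have hsh := shiftθ ω (2 * n + 1) hm
      have hshr := shiftr ω (2 * n + 1) hsh hrT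
      intro t
      have h5 := hsh t
      have hodd : ((-1 : ℝ) ^ (2 * n + 1 : ℤ)) = -1 := Odd.neg_one_zpow ⟨n, by ring⟩
      rw [h5, hshr t]
      rw [Real.cos_add_int_mul_pi, Real.sin_add_int_mul_pi, hodd]
      constructor <;> ring
end

section
/- Let ρ = lim_{k→∞} η_{kT}(ω)/k be the rotation number of the T-periodic planar linear Hamiltonian system Jz' = S(t)z. For every integer k ≥ 1 and every integer j: ρ = j/k if and only if j − 1 < η_{kT}⁻ ≤ j ≤ η_{kT}⁺ < j + 1; ρ < j/k if and only if η_{kT}⁺ < j; and ρ > j/k if and only if η_{kT}⁻ > j. -/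
open Real Filter Topology

lemma periodic_abs_bound {f : ℝ → ℝ} {T : ℝ} (hT : 0 < T) (hf : Continuous f)
    (hper : ∀ t, f (t + T) = f t) : ∃ A : ℝ, 0 ≤ A ∧ ∀ t, |f t| ≤ A := by
  obtain ⟨A, hA⟩ := isCompact_Icc.exists_bound_of_continuousOn (s := Set.Icc 0 T)
    hf.continuousOn
  refine ⟨max A 0, le_max_right _ _, fun t => ?_⟩
  have hper' : Function.Periodic f T := hper
  obtain ⟨y, hy, he⟩ := hper'.exists_mem_Ico₀ hT t
  rw [he]
  calc |f y| = ‖f y‖ := (Real.norm_eq_abs _).symm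
    _ ≤ A := hA y ⟨hy.1, hy.2.le⟩
    _ ≤ max A 0 := le_max_left _ _

lemma lip_trig {A B C : ℝ} (hA : 0 ≤ A) (hB : 0 ≤ B) (hC : 0 ≤ C)
    (a b c : ℝ) (ha : |a| ≤ A) (hb : |b| ≤ B) (hc : |c| ≤ C) :
    LipschitzWith (Real.toNNReal (A + C + 2 * B))
      (fun x => a * cos x ^ 2 + c * sin x ^ 2 - 2 * b * cos x * sin x) := by
  have hd : ∀ x : ℝ, HasDerivAt (fun x => a * cos x ^ 2 + c * sin x ^ 2 - 2 * b * cos x * sin x)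
      ((c - a) * sin (2 * x) - 2 * b * cos (2 * x)) x := by
    intro x
    have h1 : HasDerivAt (fun x : ℝ => cos x ^ 2) (2 * cos x ^ 1 * (-sin x)) x := by
      simpa using (Real.hasDerivAt_cos x).fun_pow 2
    have h2 : HasDerivAt (fun x : ℝ => sin x ^ 2) (2 * sin x ^ 1 * cos x) x := by
      simpa using (Real.hasDerivAt_sin x).fun_pow 2
    have h3 : HasDerivAt (fun x : ℝ => cos x * sin x) (-sin x * sin x + cos x * cos x) x :=
      (Real.hasDerivAt_cos x).mul (Real.hasDerivAt_sin x)
    have this : HasDerivAt (fun y => a * cos y ^ 2 + c * sin y ^ 2 - 2 * b * (cos y * sin y))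
        (a * (2 * cos x ^ 1 * -sin x) + c * (2 * sin x ^ 1 * cos x)
          - 2 * b * (-sin x * sin x + cos x * cos x)) x := ((h1.const_mul a).add (h2.const_mul c)).sub (h3.const_mul (2 * b))
    convert this using 1
    · ext y; ring
    · rw [sin_two_mul, cos_two_mul']; ring
  have hdiff : Differentiable ℝ (fun x => a * cos x ^ 2 + c * sin x ^ 2 - 2 * b * cos x * sin x) :=
    fun x => (hd x).differentiableAt
  apply lipschitzWith_of_nnnorm_deriv_le hdiff
  intro x
  rw [(hd x).deriv, ← NNReal.coe_le_coe, coe_nnnorm, Real.coe_toNNReal _ (by linarith),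
    Real.norm_eq_abs]
  calc |(c - a) * sin (2 * x) - 2 * b * cos (2 * x)|
      ≤ |(c - a) * sin (2 * x)| + |2 * b * cos (2 * x)| := abs_sub _ _
    _ ≤ |c - a| * 1 + |2 * b| * 1 := by
        gcongr <;> rw [abs_mul] <;> gcongr
        · exact abs_sin_le_one _
        · exact abs_cos_le_one _
    _ ≤ A + C + 2 * B := by
        rw [mul_one, mul_one, abs_mul]
        have : |c - a| ≤ C + A := (abs_sub _ _).trans (by gcongr)
        simp only [Nat.abs_ofNat] at *
        linarith [abs_nonneg b]

set_option maxHeartbeats 1000000 in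
/-- Let `ρ` be the rotation number of the `T`-periodic system
`J z' = S(t) z` (the limit of `η_{kT}(ω)/k`, independent of `ω`), and for each `k` let
`ηm k`, `ηM k` be the min and max over `ω` of the winding number `η_{kT}(ω)`. Then for
every `k ≥ 1` and integer `j`: `ρ = j/k` iff `j−1 < ηm k ≤ j ≤ ηM k < j+1`;
`ρ < j/k` iff `ηM k < j`; and `ρ > j/k` iff `ηm k > j`. -/
theorem rotation_number_winding_characterization
    (T : ℝ) (hT : 0 < T)
    (a b c : ℝ → ℝ)
    (ha : Continuous a) (hb : Continuous b) (hc : Continuous c)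
    (haper : ∀ t, a (t + T) = a t) (hbper : ∀ t, b (t + T) = b t)
    (hcper : ∀ t, c (t + T) = c t)
    (θ : ℝ → ℝ → ℝ)
    (hθ0 : ∀ ω, θ 0 ω = ω)
    (hθ : ∀ ω t, HasDerivAt (fun s => θ s ω)
      (a t * cos (θ t ω) ^ 2 + c t * sin (θ t ω) ^ 2
        - 2 * b t * cos (θ t ω) * sin (θ t ω)) t)
    (ηm ηM : ℕ → ℝ)
    (hmin : ∀ k : ℕ, IsLeast (Set.range fun ω => (θ (k * T) ω - ω) / (2 * π)) (ηm k))
    (hmax : ∀ k : ℕ, IsGreatest (Set.range fun ω => (θ (k * T) ω - ω) / (2 * π)) (ηM k))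
    (ρ : ℝ)
    (hρ : ∀ ω, Tendsto (fun k : ℕ => (θ (k * T) ω - ω) / (2 * π * k)) atTop (𝓝 ρ)) :
    ∀ k : ℕ, 1 ≤ k → ∀ j : ℤ,
      ((ρ = j / k) ↔
        ((j : ℝ) - 1 < ηm k ∧ ηm k ≤ j ∧ (j : ℝ) ≤ ηM k ∧ ηM k < (j : ℝ) + 1)) ∧
      ((ρ < j / k) ↔ ηM k < j) ∧
      ((ρ > j / k) ↔ (j : ℝ) < ηm k) := by
  have hπ : 0 < π := Real.pi_pos
  have h2π : (0:ℝ) < 2 * π := by linarith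
  -- the vector field
  set F : ℝ → ℝ → ℝ := fun t x =>
    a t * cos x ^ 2 + c t * sin x ^ 2 - 2 * b t * cos x * sin x with hFdef
  obtain ⟨A, hA0, hA⟩ := periodic_abs_bound hT ha haper
  obtain ⟨B, hB0, hB⟩ := periodic_abs_bound hT hb hbper
  obtain ⟨C, hC0, hC⟩ := periodic_abs_bound hT hc hcper
  have hlip : ∀ t, LipschitzWith (Real.toNNReal (A + C + 2 * B)) (F t) :=
    fun t => lip_trig hA0 hB0 hC0 _ _ _ (hA t) (hB t) (hC t)
  have hθ' : ∀ ω t, HasDerivAt (fun s => θ s ω) (F t (θ t ω)) t := hθ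
  have hθcont : ∀ ω, Continuous (fun s => θ s ω) := by
    intro ω
    have : Differentiable ℝ (fun s => θ s ω) := fun s => (hθ' ω s).differentiableAt
    exact this.continuous
  -- forward-in-time uniqueness
  have uniq : ∀ (u v : ℝ → ℝ), (∀ t, HasDerivAt u (F t (u t)) t) →
      (∀ t, HasDerivAt v (F t (v t)) t) → ∀ t0 t1, t0 ≤ t1 → u t0 = v t0 → u t1 = v t1 := by
    intro u v hu hv t0 t1 h01 he
    exact ODE_solution_unique hlip
      (fun t _ => (hu t).continuousAt.continuousWithinAt)
      (fun t _ => (hu t).hasDerivWithinAt)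
      (fun t _ => (hv t).continuousAt.continuousWithinAt)
      (fun t _ => (hv t).hasDerivWithinAt) he ⟨h01, le_refl t1⟩
  -- F is 2π-periodic in space
  have Fshift : ∀ (t x : ℝ) (n : ℤ), F t (x + 2 * π * n) = F t x := by
    intro t x n
    have hx : x + 2 * π * n = x + n * (2 * π) := by ring
    simp only [hFdef, hx, Real.cos_add_int_mul_two_pi, Real.sin_add_int_mul_two_pi]
  -- equivariance under ω ↦ ω + 2πn
  have equivar : ∀ (n : ℤ) (ω t : ℝ), 0 ≤ t → θ t (ω + 2 * π * n) = θ t ω + 2 * π * n := by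
    intro n ω t ht
    have hu : ∀ s, HasDerivAt (fun s => θ s ω + 2 * π * n) (F s (θ s ω + 2 * π * n)) s := by
      intro s
      rw [Fshift]
      exact (hθ' ω s).add_const _
    exact (uniq _ _ hu (hθ' (ω + 2 * π * n)) 0 t ht (by rw [hθ0, hθ0])).symm
  -- periodicity of F in time with period n*T
  have Fper : ∀ (n : ℕ) (t x : ℝ), F (t + n * T) x = F t x := by
    intro n t x
    have hpa : Function.Periodic a T := haper
    have hpb : Function.Periodic b T := hbper
    have hpc : Function.Periodic c T := hcper
    simp only [hFdef, (hpa.nat_mul n) t, (hpb.nat_mul n) t, (hpc.nat_mul n) t]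
  -- semigroup/shift property
  have shift : ∀ (n : ℕ) (ω s : ℝ), 0 ≤ s → θ (s + n * T) ω = θ s (θ (n * T) ω) := by
    intro n ω s hs
    have hu : ∀ r, HasDerivAt (fun r => θ (r + n * T) ω) (F r (θ (r + n * T) ω)) r := by
      intro r
      have h1 := (hθ' ω (r + n * T)).comp r ((hasDerivAt_id r).add_const ((n : ℝ) * T))
      rw [mul_one] at h1
      have h2 : F (r + n * T) (θ (r + n * T) ω) = F r (θ (r + n * T) ω) := Fper n r _
      exact h2 ▸ h1
    exact uniq _ _ hu (hθ' (θ (n * T) ω)) 0 s hs (by rw [hθ0, zero_add])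
  intro k hk j
  have hk0 : (0:ℝ) < (k:ℝ) := by exact_mod_cast hk
  set τ : ℝ := (k : ℝ) * T with hτdef
  have hτ0 : 0 ≤ τ := by positivity
  -- weak monotonicity of ω ↦ θ τ ω
  have mono : ∀ ω1 ω2 : ℝ, ω1 ≤ ω2 → θ τ ω1 ≤ θ τ ω2 := by
    intro ω1 ω2 h12
    by_contra hlt
    push_neg at hlt
    rcases eq_or_lt_of_le h12 with heq | h12'
    · rw [heq] at hlt; exact lt_irrefl _ hlt
    · have hcont : ContinuousOn (fun s => θ s ω2 - θ s ω1) (Set.Icc 0 τ) :=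
        ((hθcont ω2).sub (hθcont ω1)).continuousOn
      have h0pos : 0 ≤ θ 0 ω2 - θ 0 ω1 := by rw [hθ0, hθ0]; linarith
      have hτneg : θ τ ω2 - θ τ ω1 ≤ 0 := by linarith
      obtain ⟨s0, hs0mem, hs0⟩ : ∃ s0 ∈ Set.Icc 0 τ, θ s0 ω2 - θ s0 ω1 = 0 := by
        have := intermediate_value_Icc' hτ0 hcont (a := 0)
        have h0mem : (0:ℝ) ∈ Set.Icc (θ τ ω2 - θ τ ω1) (θ 0 ω2 - θ 0 ω1) := ⟨hτneg, h0pos⟩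
        obtain ⟨s0, hs0, he⟩ := this h0mem
        exact ⟨s0, hs0, he⟩
      have := uniq _ _ (hθ' ω2) (hθ' ω1) s0 τ hs0mem.2 (by linarith)
      linarith
  -- basic bounds from min/max
  have hub : ∀ ω, θ τ ω - ω ≤ 2 * π * ηM k := by
    intro ω
    have := (hmax k).2 (Set.mem_range_self ω)
    rw [div_le_iff₀ h2π] at this
    linarith
  have hlb : ∀ ω, 2 * π * ηm k ≤ θ τ ω - ω := by
    intro ω
    have := (hmin k).2 (Set.mem_range_self ω)
    rw [le_div_iff₀ h2π] at this
    linarith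
  obtain ⟨ω₁, hω₁⟩ := (hmin k).1
  obtain ⟨ω₂, hω₂⟩ := (hmax k).1
  have hω₁' : θ τ ω₁ = ω₁ + 2 * π * ηm k := by
    have : (θ τ ω₁ - ω₁) / (2 * π) = ηm k := hω₁
    field_simp at this; linarith
  have hω₂' : θ τ ω₂ = ω₂ + 2 * π * ηM k := by
    have : (θ τ ω₂ - ω₂) / (2 * π) = ηM k := hω₂
    field_simp at this; linarith
  have hmM : ηm k ≤ ηM k := (hmin k).2 (hmax k).1
  -- gap: ηM k - ηm k < 1
  have hgap : ηM k - ηm k < 1 := by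
    set n : ℤ := ⌈(ω₂ - ω₁) / (2 * π)⌉ with hn
    have hn1 : ω₂ ≤ ω₁ + 2 * π * n := by
      have := Int.le_ceil ((ω₂ - ω₁) / (2 * π))
      rw [div_le_iff₀ h2π] at this
      linarith
    have hn2 : ω₁ + 2 * π * n < ω₂ + 2 * π := by
      have h' : (n : ℝ) < (ω₂ - ω₁) / (2 * π) + 1 := Int.ceil_lt_add_one _
      have h'' : (n : ℝ) * (2 * π) < ω₂ - ω₁ + 2 * π := by
        rw [← sub_lt_iff_lt_add] at h' ⊢
        calc (n:ℝ) * (2*π) - 2*π = ((n:ℝ) - 1) * (2*π) := by ring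
          _ < ((ω₂ - ω₁)/(2*π)) * (2*π) := by
              apply mul_lt_mul_of_pos_right _ h2π
              linarith
          _ = ω₂ - ω₁ := by field_simp
      linarith
    have hmono := mono ω₂ (ω₁ + 2 * π * n) hn1
    rw [equivar n ω₁ τ hτ0] at hmono
    rw [hω₂', hω₁'] at hmono
    -- ω₂ + 2π ηM ≤ ω₁ + 2π ηm + 2πn, and ω₁ + 2πn < ω₂ + 2π
    have : 2 * π * ηM k < 2 * π * ηm k + 2 * π := by linarith
    nlinarith
  -- upper iterate bound
  have iterUB : ∀ (m : ℕ) (ω : ℝ), θ ((m * k : ℕ) * T) ω ≤ ω + m * (2 * π * ηM k) := by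
    intro m
    induction m with
    | zero => intro ω; simp [hθ0]
    | succ m ih =>
      intro ω
      have hcast : (((m + 1) * k : ℕ) : ℝ) * T = τ + ((m * k : ℕ) : ℝ) * T := by
        push_cast; rw [hτdef]; ring
      rw [hcast, shift (m * k) ω τ hτ0]
      have h1 := hub (θ (((m * k : ℕ) : ℝ) * T) ω)
      have h2 := ih ω
      push_cast
      push_cast at h1 h2
      linarith
  -- lower iterate bound
  have iterLB : ∀ (m : ℕ) (ω : ℝ), ω + m * (2 * π * ηm k) ≤ θ ((m * k : ℕ) * T) ω := by
    intro m
    induction m with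
    | zero => intro ω; simp [hθ0]
    | succ m ih =>
      intro ω
      have hcast : (((m + 1) * k : ℕ) : ℝ) * T = τ + ((m * k : ℕ) : ℝ) * T := by
        push_cast; rw [hτdef]; ring
      rw [hcast, shift (m * k) ω τ hτ0]
      have h1 := hlb (θ (((m * k : ℕ) : ℝ) * T) ω)
      have h2 := ih ω
      push_cast
      push_cast at h1 h2
      linarith
  -- subsequence tendsto
  have hmk : Tendsto (fun m : ℕ => m * k) atTop atTop :=
    tendsto_atTop_mono (fun m => Nat.le_mul_of_pos_right m hk) tendsto_id
  have hsub : ∀ ω, Tendsto (fun m : ℕ =>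
      (θ (((m * k : ℕ) : ℝ) * T) ω - ω) / (2 * π * ((m * k : ℕ) : ℝ))) atTop (𝓝 ρ) :=
    fun ω => (hρ ω).comp hmk
  -- ρ ≤ ηM k / k
  have hρub : ρ ≤ ηM k / (k : ℝ) := by
    apply le_of_tendsto (hsub 0)
    filter_upwards [eventually_ge_atTop 1] with m hm
    have h1 := iterUB m 0
    have hm0 : (0:ℝ) < (m:ℝ) := by exact_mod_cast hm
    have hden : (0:ℝ) < 2 * π * ((m * k : ℕ) : ℝ) := by
      push_cast; positivity
    rw [div_le_div_iff₀ hden hk0]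
    push_cast at h1 ⊢
    nlinarith
  -- ηm k / k ≤ ρ
  have hρlb : ηm k / (k : ℝ) ≤ ρ := by
    apply ge_of_tendsto (hsub 0)
    filter_upwards [eventually_ge_atTop 1] with m hm
    have h1 := iterLB m 0
    have hm0 : (0:ℝ) < (m:ℝ) := by exact_mod_cast hm
    have hden : (0:ℝ) < 2 * π * ((m * k : ℕ) : ℝ) := by
      push_cast; positivity
    rw [div_le_div_iff₀ hk0 hden]
    push_cast at h1 ⊢
    nlinarith
  -- continuity in ω via Gronwall
  have contω : Continuous (fun ω => θ τ ω) := by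
    have hL : ∀ ω ω' : ℝ, dist (θ τ ω) (θ τ ω') ≤
        dist ω ω' * Real.exp ((Real.toNNReal (A + C + 2 * B) : ℝ) * τ) := by
      intro ω ω'
      have := dist_le_of_trajectories_ODE hlip
        ((hθcont ω).continuousOn : ContinuousOn (fun s => θ s ω) (Set.Icc 0 τ))
        (fun t _ => (hθ' ω t).hasDerivWithinAt)
        ((hθcont ω').continuousOn : ContinuousOn (fun s => θ s ω') (Set.Icc 0 τ))
        (fun t _ => (hθ' ω' t).hasDerivWithinAt)
        (by rw [hθ0, hθ0] : dist (θ 0 ω) (θ 0 ω') ≤ dist ω ω') τ ⟨hτ0, le_refl τ⟩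
      simpa using this
    apply (LipschitzWith.of_dist_le_mul (K := Real.toNNReal
        (Real.exp ((Real.toNNReal (A + C + 2 * B) : ℝ) * τ))) ?_).continuous
    intro ω ω'
    rw [Real.coe_toNNReal _ (Real.exp_nonneg _)]
    rw [mul_comm]
    exact hL ω ω'
  -- rational case
  have hrat : ηm k ≤ (j : ℝ) → (j : ℝ) ≤ ηM k → ρ = (j : ℝ) / (k : ℝ) := by
    intro h1 h2
    have hg : Continuous (fun ω => θ τ ω - ω - 2 * π * j) :=
      (contω.sub continuous_id).sub continuous_const
    have hv1 : θ τ ω₁ - ω₁ - 2 * π * j ≤ 0 := by rw [hω₁']; nlinarith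
    have hv2 : 0 ≤ θ τ ω₂ - ω₂ - 2 * π * j := by rw [hω₂']; nlinarith
    obtain ⟨ω₀, _, hω₀⟩ : ∃ ω₀ ∈ Set.uIcc ω₁ ω₂, θ τ ω₀ - ω₀ - 2 * π * j = 0 := by
      have := intermediate_value_uIcc (f := fun ω => θ τ ω - ω - 2 * π * j)
        (a := ω₁) (b := ω₂) hg.continuousOn
      obtain ⟨ω₀, hm, he⟩ := this (Set.mem_uIcc.mpr (Or.inl ⟨hv1, hv2⟩))
      exact ⟨ω₀, hm, he⟩
    have hfix : θ τ ω₀ = ω₀ + 2 * π * j := by linarith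
    have iter : ∀ m : ℕ, θ (((m * k : ℕ) : ℝ) * T) ω₀ = ω₀ + 2 * π * ((j * m : ℤ) : ℝ) := by
      intro m
      induction m with
      | zero => push_cast; simp [hθ0]
      | succ m ih =>
        have hcast : (((m + 1) * k : ℕ) : ℝ) * T = τ + ((m * k : ℕ) : ℝ) * T := by
          push_cast; rw [hτdef]; ring
        rw [hcast, shift (m * k) ω₀ τ hτ0, ih, equivar (j * m) ω₀ τ hτ0, hfix]
        push_cast; ring
    have hconst : ∀ᶠ m : ℕ in atTop, (θ (((m * k : ℕ) : ℝ) * T) ω₀ - ω₀) /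
        (2 * π * ((m * k : ℕ) : ℝ)) = (j : ℝ) / (k : ℝ) := by
      filter_upwards [eventually_ge_atTop 1] with m hm
      have hm0 : (0:ℝ) < (m:ℝ) := by exact_mod_cast hm
      rw [iter m]
      push_cast
      field_simp
      ring
    have : Tendsto (fun _ : ℕ => (j : ℝ) / (k : ℝ)) atTop (𝓝 ρ) :=
      (hsub ω₀).congr' hconst
    exact (tendsto_nhds_unique tendsto_const_nhds this).symm
  -- final pure logic
  have hdiv : ∀ x y : ℝ, x < y → x / (k:ℝ) < y / (k:ℝ) := by
    intro x y hxy
    rw [div_lt_div_iff₀ hk0 hk0]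
    nlinarith
  have hMj : ηM k < (j:ℝ) → ρ < (j:ℝ)/(k:ℝ) := fun h => lt_of_le_of_lt hρub (hdiv _ _ h)
  have hjm : (j:ℝ) < ηm k → (j:ℝ)/(k:ℝ) < ρ := fun h => lt_of_lt_of_le (hdiv _ _ h) hρlb
  refine ⟨⟨?_, ?_⟩, ⟨?_, ?_⟩, ?_, ?_⟩
  · intro hρeq
    have h1 : ¬ ηM k < (j:ℝ) := fun h => by
      have := hMj h; rw [hρeq] at this; exact lt_irrefl _ this
    have h2 : ¬ (j:ℝ) < ηm k := fun h => by
      have := hjm h; rw [hρeq] at this; exact lt_irrefl _ this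
    push_neg at h1 h2
    exact ⟨by linarith, h2, h1, by linarith⟩
  · rintro ⟨_, h2, h3, _⟩
    exact hrat h2 h3
  · intro hlt
    by_contra h
    push_neg at h
    rcases le_or_gt (ηm k) (j:ℝ) with h' | h'
    · have := hrat h' h
      rw [this] at hlt
      exact lt_irrefl _ hlt
    · have := hjm h'
      linarith
  · exact fun h => hMj h
  · intro hlt
    by_contra h
    push_neg at h
    rcases le_or_gt (j:ℝ) (ηM k) with h' | h'
    · have := hrat h h'
      rw [this] at hlt
      exact lt_irrefl _ hlt
    · have := hMj h'
      exact absurd hlt (not_lt.mpr (le_of_lt this))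
  · exact fun h => hjm h
end

section
/- For every real numbers 0 ≤ a < b and every integer r ≥ 1, there exists k* ≥ 1 such that for every integer k ≥ k* there exist at least r distinct integers j₁ < ⋯ < j_r, each coprime with k, satisfying a·k < j_i < b·k for all i. -/
open Finset

/-- count of `n ∈ [x,y)` avoiding all divisors in `S`. -/
def Dcnt (S : Finset ℕ) (x y : ℕ) : ℕ :=
  ((Finset.Ico x y).filter (fun n => ∀ p ∈ S, ¬ p ∣ n)).card

lemma le_mul_iff_ceil {p x m : ℕ} (hp : 0 < p) : (x + p - 1) / p ≤ m ↔ x ≤ p * m := by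
  rw [Nat.div_le_iff_le_mul_add_pred hp]
  omega

lemma filter_dvd_image {S : Finset ℕ} {p x y : ℕ} (hp : 0 < p) :
    ((Finset.Ico x y).filter (fun n => (∀ q ∈ S, ¬ q ∣ n) ∧ p ∣ n)) =
      ((Finset.Ico ((x + p - 1) / p) ((y + p - 1) / p)).filter
        (fun m => ∀ q ∈ S, ¬ q ∣ p * m)).image (fun m => p * m) := by
  have key : ∀ m, m < (y + p - 1) / p ↔ p * m < y := by
    intro m
    rw [← not_le, ← not_le, le_mul_iff_ceil hp]
  ext n
  simp only [mem_image, mem_filter, mem_Ico]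
  constructor
  · rintro ⟨⟨hx, hy⟩, hq, m, rfl⟩
    exact ⟨m, ⟨⟨(le_mul_iff_ceil hp).2 hx, (key m).2 hy⟩, hq⟩, rfl⟩
  · rintro ⟨m, ⟨⟨hx, hy⟩, hq⟩, rfl⟩
    exact ⟨⟨(le_mul_iff_ceil hp).1 hx, (key m).1 hy⟩, hq, ⟨m, rfl⟩⟩

lemma Dcnt_recursion {S : Finset ℕ} {p : ℕ} (hp : p.Prime) (hpS : p ∉ S)
    (hS : ∀ q ∈ S, Nat.Prime q) (x y : ℕ) :
    Dcnt (insert p S) x y + Dcnt S ((x + p - 1) / p) ((y + p - 1) / p) = Dcnt S x y := by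
  classical
  unfold Dcnt
  have split : ((Finset.Ico x y).filter (fun n => ∀ q ∈ S, ¬ q ∣ n)).card =
      ((Finset.Ico x y).filter (fun n => (∀ q ∈ S, ¬ q ∣ n) ∧ ¬ p ∣ n)).card +
      ((Finset.Ico x y).filter (fun n => (∀ q ∈ S, ¬ q ∣ n) ∧ p ∣ n)).card := by
    rw [← Finset.filter_filter, ← Finset.filter_filter, add_comm]
    exact (Finset.card_filter_add_card_filter_not (fun n => p ∣ n)).symm
  rw [split]
  congr 1
  · congr 1
    apply Finset.filter_congr
    intro n _
    simp only [Finset.mem_insert]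
    constructor
    · intro h; exact ⟨fun q hq => h q (Or.inr hq), h p (Or.inl rfl)⟩
    · rintro ⟨h1, h2⟩ q hq
      rcases hq with rfl | hq
      · exact h2
      · exact h1 q hq
  · rw [filter_dvd_image hp.pos, Finset.card_image_of_injective _ (mul_right_injective₀ hp.pos.ne')]
    congr 1
    apply Finset.filter_congr
    intro m _
    constructor
    · intro h q hq hdvd
      have hq' := hS q hq
      have hne : q ≠ p := fun e => hpS (e ▸ hq)
      exact h q hq (((Nat.coprime_primes hq' hp).2 hne).dvd_of_dvd_mul_left hdvd)
    · intro h q hq hdvd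
      exact h q hq (hdvd.mul_left p)

lemma len_bound {p : ℕ} (hp : 2 ≤ p) (x y : ℕ) :
    |(((y + p - 1) / p - (x + p - 1) / p : ℕ) : ℝ) - ((y - x : ℕ) : ℝ) / p| ≤ 1 := by
  have hp0 : (0:ℝ) < p := by exact_mod_cast Nat.lt_of_lt_of_le Nat.zero_lt_two hp
  have hpn : 0 < p := by omega
  rcases le_or_gt x y with hxy | hxy
  · have hxy' : (x + p - 1) / p ≤ (y + p - 1) / p := Nat.div_le_div_right (by omega)
    have h1 : (x:ℝ) ≤ p * ((x + p - 1) / p : ℕ) := by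
      exact_mod_cast (le_mul_iff_ceil hpn).1 le_rfl
    have h3 : (y:ℝ) ≤ p * ((y + p - 1) / p : ℕ) := by
      exact_mod_cast (le_mul_iff_ceil hpn).1 le_rfl
    have hc : ∀ z : ℕ, ((z + p - 1 : ℕ) : ℝ) = (z:ℝ) + p - 1 := by
      intro z
      rw [Nat.cast_sub (by omega : 1 ≤ z + p)]; push_cast; ring
    have h2 : (p:ℝ) * ((x + p - 1) / p : ℕ) ≤ (x:ℝ) + p - 1 := by
      have hn : p * ((x + p - 1) / p) ≤ x + p - 1 := by
        rw [mul_comm]; exact Nat.div_mul_le_self _ _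
      calc (p:ℝ) * ((x + p - 1) / p : ℕ) ≤ ((x + p - 1 : ℕ) : ℝ) := by exact_mod_cast hn
        _ = (x:ℝ) + p - 1 := hc x
    have h4 : (p:ℝ) * ((y + p - 1) / p : ℕ) ≤ (y:ℝ) + p - 1 := by
      have hn : p * ((y + p - 1) / p) ≤ y + p - 1 := by
        rw [mul_comm]; exact Nat.div_mul_le_self _ _
      calc (p:ℝ) * ((y + p - 1) / p : ℕ) ≤ ((y + p - 1 : ℕ) : ℝ) := by exact_mod_cast hn
        _ = (y:ℝ) + p - 1 := hc y
    rw [Nat.cast_sub hxy', Nat.cast_sub hxy, abs_le]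
    constructor
    · have key : ((y:ℝ) - x) / p ≤ (((y + p - 1) / p : ℕ) : ℝ) - ((x + p - 1) / p : ℕ) + 1 := by
        rw [div_le_iff₀ hp0]; nlinarith
      linarith
    · have key : (((y + p - 1) / p : ℕ) : ℝ) - ((x + p - 1) / p : ℕ) - 1 ≤ ((y:ℝ) - x) / p := by
        rw [le_div_iff₀ hp0]; nlinarith
      linarith
  · have h0 : y - x = 0 := by omega
    have h0' : (y + p - 1) / p - (x + p - 1) / p = 0 := by
      have : (y + p - 1) / p ≤ (x + p - 1) / p := Nat.div_le_div_right (by omega)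
      omega
    rw [h0, h0']
    simp

lemma Dcnt_approx (S : Finset ℕ) (hS : ∀ p ∈ S, Nat.Prime p) (x y : ℕ) :
    |(Dcnt S x y : ℝ) - ((y - x : ℕ) : ℝ) * ∏ p ∈ S, (1 - 1/(p:ℝ))| ≤ 2 ^ S.card - 1 := by
  classical
  induction S using Finset.induction_on generalizing x y with
  | empty => simp [Dcnt]
  | @insert a S ha ih =>
    have hp : Nat.Prime a := hS a (Finset.mem_insert_self a S)
    have hS' : ∀ q ∈ S, Nat.Prime q := fun q hq => hS q (Finset.mem_insert_of_mem hq)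
    have hrec := Dcnt_recursion hp ha hS' x y
    set x' := (x + a - 1) / a with hx'
    set y' := (y + a - 1) / a with hy'
    have h1 := ih hS' x y
    have h2 := ih hS' x' y'
    have hlen := len_bound hp.two_le x y
    have hP0 : (0:ℝ) ≤ ∏ p ∈ S, (1 - 1/(p:ℝ)) := by
      apply Finset.prod_nonneg
      intro p hpp
      have h2p : (2:ℝ) ≤ p := by exact_mod_cast (hS' p hpp).two_le
      have : 1/(p:ℝ) ≤ 1 := by
        rw [div_le_one (by linarith)]; linarith
      linarith
    have hP1 : ∏ p ∈ S, (1 - 1/(p:ℝ)) ≤ 1 := by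
      apply Finset.prod_le_one
      · intro p hpp
        have h2p : (2:ℝ) ≤ p := by exact_mod_cast (hS' p hpp).two_le
        have : 1/(p:ℝ) ≤ 1 := by
          rw [div_le_one (by linarith)]; linarith
        linarith
      · intro p hpp
        have h2p : (2:ℝ) ≤ p := by exact_mod_cast (hS' p hpp).two_le
        have : (0:ℝ) ≤ 1/p := by positivity
        linarith
    have hcast : (Dcnt (insert a S) x y : ℝ) = (Dcnt S x y : ℝ) - (Dcnt S x' y' : ℝ) := by
      have := congrArg (Nat.cast : ℕ → ℝ) hrec
      push_cast at this
      linarith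
    have habs : |((((y' - x' : ℕ)) : ℝ) - ((y - x : ℕ) : ℝ)/a) * ∏ p ∈ S, (1 - 1/(p:ℝ))| ≤ 1 := by
      rw [abs_mul]
      apply mul_le_one₀ hlen (abs_nonneg _)
      rw [abs_of_nonneg hP0]; exact hP1
    rw [Finset.prod_insert ha, Finset.card_insert_of_notMem ha, pow_succ]
    obtain ⟨l1, u1⟩ := abs_le.mp h1
    obtain ⟨l2, u2⟩ := abs_le.mp h2
    obtain ⟨l3, u3⟩ := abs_le.mp habs
    rw [abs_le]
    have h2s : (1:ℝ) ≤ 2 ^ S.card := one_le_pow₀ (by norm_num)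
    have hid : (Dcnt S x y : ℝ) - (Dcnt S x' y' : ℝ)
        - ((y - x : ℕ) : ℝ) * ((1 - 1/(a:ℝ)) * ∏ p ∈ S, (1 - 1/(p:ℝ))) =
        ((Dcnt S x y : ℝ) - ((y - x : ℕ) : ℝ) * ∏ p ∈ S, (1 - 1/(p:ℝ)))
        - ((Dcnt S x' y' : ℝ) - ((y' - x' : ℕ) : ℝ) * ∏ p ∈ S, (1 - 1/(p:ℝ)))
        - ((((y' - x' : ℕ) : ℝ) - ((y - x : ℕ) : ℝ)/(a:ℝ)) * ∏ p ∈ S, (1 - 1/(p:ℝ))) := by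
      ring
    constructor
    · rw [hcast]
      linarith [l1, u2, u3, hid]
    · rw [hcast]
      linarith [u1, l2, l3, hid]

lemma card_le_of_max {S : Finset ℕ} {a : ℕ} (ha : 2 ≤ a) (h2 : ∀ p ∈ S, 2 ≤ p)
    (hlt : ∀ x ∈ S, x < a) : S.card + 2 ≤ a := by
  have hsub : S ⊆ Finset.Ico 2 a := by
    intro p hp
    rw [Finset.mem_Ico]
    exact ⟨h2 p hp, hlt p hp⟩
  have hc := Finset.card_le_card hsub
  rw [Nat.card_Ico] at hc
  omega

lemma prod_pred_ge (S : Finset ℕ) (h2 : ∀ p ∈ S, 2 ≤ p) :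
    ∏ p ∈ S, p ≤ (S.card + 1) * ∏ p ∈ S, (p - 1) := by
  classical
  induction S using Finset.induction_on_max with
  | empty => simp
  | insert a S hlt ih =>
    have h2' : ∀ p ∈ S, 2 ≤ p := fun p hp => h2 p (Finset.mem_insert_of_mem hp)
    have ha2 : 2 ≤ a := h2 a (Finset.mem_insert_self a S)
    have haS : a ∉ S := fun h => lt_irrefl a (hlt a h)
    have hcard : S.card + 2 ≤ a := card_le_of_max ha2 h2' hlt
    rw [Finset.prod_insert haS, Finset.prod_insert haS, Finset.card_insert_of_notMem haS]
    have ih' := ih h2'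
    have hprod1 : 1 ≤ ∏ p ∈ S, (p - 1) := by
      apply Finset.one_le_prod'
      intro p hp
      have := h2' p hp
      omega
    calc a * ∏ p ∈ S, p ≤ a * ((S.card + 1) * ∏ p ∈ S, (p - 1)) := by
          exact Nat.mul_le_mul_left a ih'
      _ ≤ (S.card + 1 + 1) * ((a - 1) * ∏ p ∈ S, (p - 1)) := by
          rw [← mul_assoc, ← mul_assoc]
          apply Nat.mul_le_mul_right
          obtain ⟨a', rfl⟩ : ∃ a', a = a' + 1 := ⟨a - 1, by omega⟩
          simp only [Nat.add_sub_cancel]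
          nlinarith [hcard]

lemma factorial_le_prod (S : Finset ℕ) (h2 : ∀ p ∈ S, 2 ≤ p) :
    Nat.factorial (S.card + 1) ≤ ∏ p ∈ S, p := by
  classical
  induction S using Finset.induction_on_max with
  | empty => simp
  | insert a S hlt ih =>
    have h2' : ∀ p ∈ S, 2 ≤ p := fun p hp => h2 p (Finset.mem_insert_of_mem hp)
    have ha2 : 2 ≤ a := h2 a (Finset.mem_insert_self a S)
    have haS : a ∉ S := fun h => lt_irrefl a (hlt a h)
    have hcard : S.card + 2 ≤ a := card_le_of_max ha2 h2' hlt
    rw [Finset.prod_insert haS, Finset.card_insert_of_notMem haS]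
    calc Nat.factorial (S.card + 1 + 1) = (S.card + 2) * Nat.factorial (S.card + 1) := rfl
      _ ≤ a * ∏ p ∈ S, p := Nat.mul_le_mul hcard (ih h2')

lemma pow16_le (s : ℕ) : 16 ^ s ≤ 16 ^ 15 * Nat.factorial (s + 1) := by
  induction s with
  | zero => simp
  | succ n ih =>
    rcases le_or_gt (n + 1) 15 with h | h
    · calc 16 ^ (n+1) ≤ 16 ^ 15 := Nat.pow_le_pow_right (by norm_num) h
        _ ≤ 16 ^ 15 * Nat.factorial (n + 2) := Nat.le_mul_of_pos_right _ (Nat.factorial_pos _)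
    · calc 16 ^ (n+1) = 16 ^ n * 16 := by ring
        _ ≤ (16 ^ 15 * Nat.factorial (n+1)) * (n + 2) := Nat.mul_le_mul ih (by omega)
        _ = 16 ^ 15 * Nat.factorial (n + 2) := by
            rw [mul_assoc]
            congr 1
            rw [Nat.factorial_succ (n+1), mul_comm]

set_option maxHeartbeats 2000000 in
/-- For all reals `0 ≤ a < b` and every integer `r ≥ 1`, there exists
`k* ≥ 1` such that every integer `k ≥ k*` admits at least `r` distinct integers, each
coprime with `k`, lying in the open interval `(a·k, b·k)`. -/
theorem coprime_integers_in_interval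
    (a b : ℝ) (ha : 0 ≤ a) (hab : a < b) (r : ℕ) (hr : 1 ≤ r) :
    ∃ kstar : ℕ, 1 ≤ kstar ∧ ∀ k : ℕ, kstar ≤ k →
      ∃ s : Finset ℤ, r ≤ s.card ∧
        ∀ j ∈ s, IsCoprime (k : ℤ) j ∧ a * k < j ∧ (j : ℝ) < b * k := by
  classical
  have hba : (0:ℝ) < b - a := by linarith
  obtain ⟨K, hK⟩ := exists_nat_gt (max (4/(b-a)) (4*(16:ℝ)^15*(r+1)^2/(b-a)^2))
  refine ⟨K + 1, by omega, ?_⟩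
  intro k hk
  have hk0 : k ≠ 0 := by omega
  have hk0' : 0 < k := by omega
  have hkR : (K:ℝ) < k := by exact_mod_cast Nat.lt_of_lt_of_le (Nat.lt_succ_self K) hk
  have hkmax : max (4/(b-a)) (4*(16:ℝ)^15*(r+1)^2/(b-a)^2) < k := lt_trans hK hkR
  have hk4 : (4:ℝ) ≤ (b-a) * k := by
    have h1 : 4/(b-a) < (k:ℝ) := lt_of_le_of_lt (le_max_left _ _) hkmax
    rw [div_lt_iff₀ hba] at h1
    linarith
  have hk16 : 4*(16:ℝ)^15*(r+1)^2 < (b-a)^2 * k := by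
    have h1 : 4*(16:ℝ)^15*(r+1)^2/(b-a)^2 < (k:ℝ) := lt_of_le_of_lt (le_max_right _ _) hkmax
    rw [div_lt_iff₀ (by positivity)] at h1
    linarith
  set S := k.primeFactors with hSdef
  have hprime : ∀ p ∈ S, Nat.Prime p := fun p hp => Nat.prime_of_mem_primeFactors hp
  have h2S : ∀ p ∈ S, 2 ≤ p := fun p hp => (hprime p hp).two_le
  set s := S.card with hsdef
  -- 16^s ≤ 16^15 * k
  have h16 : (16:ℕ)^s ≤ 16^15 * k := by
    calc (16:ℕ)^s ≤ 16^15 * Nat.factorial (s+1) := pow16_le s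
      _ ≤ 16^15 * ∏ p ∈ S, p := Nat.mul_le_mul_left _ (factorial_le_prod S h2S)
      _ ≤ 16^15 * k := Nat.mul_le_mul_left _ (Nat.le_of_dvd hk0' (Nat.prod_primeFactors_dvd k))
  -- product lower bound
  set P := ∏ p ∈ S, (1 - 1/(p:ℝ)) with hPdef
  have hQpos : 0 < ∏ p ∈ S, p := Finset.prod_pos (fun p hp => by have := h2S p hp; omega)
  have hPeq : P * ((∏ p ∈ S, p : ℕ) : ℝ) = ((∏ p ∈ S, (p - 1) : ℕ) : ℝ) := by
    rw [Nat.cast_prod, Nat.cast_prod, ← Finset.prod_mul_distrib]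
    apply Finset.prod_congr rfl
    intro p hp
    have h2p : (2:ℝ) ≤ p := by exact_mod_cast h2S p hp
    rw [Nat.cast_sub (by have := h2S p hp; omega : 1 ≤ p), Nat.cast_one]
    field_simp
  have hPge : 1/((s:ℝ)+1) ≤ P := by
    have hnat : ((∏ p ∈ S, p : ℕ) : ℝ) ≤ ((s:ℝ)+1) * ((∏ p ∈ S, (p - 1) : ℕ) : ℝ) := by
      have := prod_pred_ge S h2S
      exact_mod_cast this
    have hQR : (0:ℝ) < ((∏ p ∈ S, p : ℕ) : ℝ) := by exact_mod_cast hQpos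
    rw [div_le_iff₀ (by positivity : (0:ℝ) < (s:ℝ)+1), ← mul_le_mul_iff_left₀ hQR]
    calc (1:ℝ) * ((∏ p ∈ S, p : ℕ) : ℝ) = ((∏ p ∈ S, p : ℕ) : ℝ) := one_mul _
      _ ≤ ((s:ℝ)+1) * ((∏ p ∈ S, (p - 1) : ℕ) : ℝ) := hnat
      _ = P * ((s:ℝ)+1) * ((∏ p ∈ S, p : ℕ) : ℝ) := by rw [← hPeq]; ring
  -- interval endpoints
  set x := ⌊a*(k:ℝ)⌋₊ + 1 with hxdef
  set y := ⌈b*(k:ℝ)⌉₊ with hydef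
  have hak : (0:ℝ) ≤ a*k := by positivity
  have hxle : (x:ℝ) ≤ a*k + 1 := by
    rw [hxdef]; push_cast
    have := Nat.floor_le hak
    linarith
  have hyge : b*(k:ℝ) ≤ (y:ℝ) := Nat.le_ceil _
  have hxy : x ≤ y := by
    have hlt : (x:ℝ) < (y:ℝ) := by nlinarith [hk4]
    exact_mod_cast hlt.le
  have hN : (b-a)*k - 2 ≤ ((y - x : ℕ):ℝ) := by
    rw [Nat.cast_sub hxy]
    linarith
  have hN0 : (0:ℝ) ≤ ((y - x : ℕ):ℝ) := Nat.cast_nonneg _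
  have hDa := Dcnt_approx S hprime x y
  obtain ⟨hDl, _⟩ := abs_le.mp hDa
  have h2s1 : (s:ℝ) + 1 ≤ 2^s := by exact_mod_cast (Nat.lt_two_pow_self (n := s))
  have h16R : (16:ℝ)^s ≤ 16^15 * k := by exact_mod_cast h16
  have hkpos : (0:ℝ) < k := by exact_mod_cast hk0'
  have h4s : (4:ℝ)^s * ((r:ℝ)+1) + 2 ≤ (b-a)*k := by
    have h2' : (0:ℝ) < 2*((r:ℝ)+1) := by positivity
    rcases le_or_gt ((4:ℝ)^s) ((b-a)*k/(2*((r:ℝ)+1))) with hc | hc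
    · rw [le_div_iff₀ h2'] at hc
      nlinarith [hk4]
    · exfalso
      rw [div_lt_iff₀ h2'] at hc
      have h44 : ((4:ℝ)^s)^2 = 16^s := by
        rw [← pow_mul, mul_comm, pow_mul]
        norm_num
      have hbk0 : (0:ℝ) ≤ (b-a)*k := by linarith [hk4]
      have hsq : ((b-a)*k)^2 < (16:ℝ)^s * (4*((r:ℝ)+1)^2) := by
        have := mul_self_lt_mul_self hbk0 hc
        calc ((b-a)*k)^2 = ((b-a)*k)*((b-a)*k) := sq ((b-a)*k)
          _ < (4^s*(2*((r:ℝ)+1))) * (4^s*(2*((r:ℝ)+1))) := this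
          _ = ((4:ℝ)^s)^2 * (4*((r:ℝ)+1)^2) := by ring
          _ = (16:ℝ)^s * (4*((r:ℝ)+1)^2) := by rw [h44]
      have hm1 : (16:ℝ)^s * (4*((r:ℝ)+1)^2) ≤ (16^15 * k) * (4*((r:ℝ)+1)^2) := by
        apply mul_le_mul_of_nonneg_right h16R
        positivity
      have hm2 : (4*(16:ℝ)^15*((r:ℝ)+1)^2) * k < ((b-a)^2*k) * k :=
        mul_lt_mul_of_pos_right hk16 hkpos
      linarith [hsq, hm1, hm2]
  have hfinal : (r:ℝ) ≤ (Dcnt S x y : ℝ) := by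
    have hs1 : (0:ℝ) < (s:ℝ)+1 := by positivity
    have hNP : ((y-x:ℕ):ℝ)/((s:ℝ)+1) ≤ ((y-x:ℕ):ℝ) * P := by
      calc ((y-x:ℕ):ℝ)/((s:ℝ)+1) = ((y-x:ℕ):ℝ) * (1/((s:ℝ)+1)) := by ring
        _ ≤ ((y-x:ℕ):ℝ) * P := mul_le_mul_of_nonneg_left hPge hN0
    have h2spos : (0:ℝ) < 2^s := by positivity
    have hr1 : (1:ℝ) ≤ r := by exact_mod_cast hr
    have hNval : ((s:ℝ)+1)*((r:ℝ) + 2^s - 1) ≤ ((y-x:ℕ):ℝ) := by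
      have e2 : (2:ℝ)^s*(2^s) = 4^s := by rw [← mul_pow]; norm_num
      have h1s : (1:ℝ) ≤ 2^s := one_le_pow₀ (by norm_num)
      have hrr : (r:ℝ) ≤ 2^s * r := by
        have := mul_le_mul_of_nonneg_right h1s (by positivity : (0:ℝ) ≤ (r:ℝ))
        linarith
      have hA : (r:ℝ) + 2^s - 1 ≤ 2^s*((r:ℝ)+1) := by
        have : (2:ℝ)^s*((r:ℝ)+1) = 2^s*r + 2^s := by ring
        linarith
      have e1 : ((s:ℝ)+1)*((r:ℝ)+2^s-1) ≤ (4:ℝ)^s*((r:ℝ)+1) := by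
        calc ((s:ℝ)+1)*((r:ℝ)+2^s-1) ≤ 2^s * (2^s*((r:ℝ)+1)) :=
              mul_le_mul h2s1 hA (by linarith) h2spos.le
          _ = (2:ℝ)^s*(2^s) * ((r:ℝ)+1) := by ring
          _ = (4:ℝ)^s*((r:ℝ)+1) := by rw [e2]
      linarith [h4s, hN]
    have hstep : (r:ℝ) + (2^s - 1) ≤ ((y-x:ℕ):ℝ)/((s:ℝ)+1) := by
      rw [le_div_iff₀ hs1]
      linarith [hNval]
    linarith [hNP, hDl, hstep]
  -- construct the finset
  refine ⟨((Finset.Ico x y).filter (fun n => ∀ p ∈ S, ¬ p ∣ n)).image (Nat.cast : ℕ → ℤ), ?_, ?_⟩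
  · rw [Finset.card_image_of_injective _ (Nat.cast_injective : Function.Injective (Nat.cast : ℕ → ℤ))]
    exact_mod_cast hfinal
  · intro j hj
    simp only [Finset.mem_image, Finset.mem_filter, Finset.mem_Ico] at hj
    obtain ⟨n, ⟨⟨hnx, hny⟩, hnd⟩, rfl⟩ := hj
    have hcop : Nat.Coprime k n := by
      by_contra hc
      obtain ⟨p, hp, hpk, hpn⟩ := Nat.Prime.not_coprime_iff_dvd.1 hc
      exact hnd p (Nat.mem_primeFactors.2 ⟨hp, hpk, hk0⟩) hpn
    refine ⟨Nat.isCoprime_iff_coprime.2 hcop, ?_, ?_⟩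
    · have h1 : a*(k:ℝ) < ⌊a*(k:ℝ)⌋₊ + 1 := Nat.lt_floor_add_one _
      have h2 : (x:ℝ) ≤ (n:ℝ) := by exact_mod_cast hnx
      push_cast
      rw [hxdef] at h2; push_cast at h2
      linarith
    · have h1 : (y:ℝ) < b*(k:ℝ) + 1 := Nat.ceil_lt_add_one (by linarith [hak, hk4] : (0:ℝ) ≤ b*(k:ℝ))
      have h2 : (n:ℝ) + 1 ≤ (y:ℝ) := by exact_mod_cast hny
      push_cast
      linarith
end
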